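/- arXiv:1909.08222 — 8 statements merged into one kernel-verified Lean document; each statement's English description precedes it below -/
import Mathlib

section
/- The function ψ is concave on ℝ^p: for all x, y ∈ ℝ^p and all λ ∈ [0,1], ψ(λx + (1−λ)y) ≥ λψ(x) + (1−λ)ψ(y). -/
open Metric Set Pointwise

section Aux

variable {V : Type*} [NormedAddCommGroup V] [NormedSpace ℝ V]

/-- Interior of the closure of a convex set with nonempty interior is contained
in the interior of the set. -/
lemma aux_interior_closure_subset {s : Set V} (hs : Convex ℝ s) {w : V}
    (hw : w ∈ interior s) : interior (closure s) ⊆ interior s := by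
  intro z hz
  rcases Metric.isOpen_iff.1 isOpen_interior z hz with ⟨δ, hδ, hball⟩
  set c : ℝ := δ / (2 * (‖z - w‖ + 1)) with hc
  have hnorm : 0 ≤ ‖z - w‖ := norm_nonneg _
  have hcpos : 0 < c := by positivity
  have hy : z + c • (z - w) ∈ closure s := by
    apply interior_subset
    apply hball
    rw [mem_ball, dist_eq_norm]
    have : z + c • (z - w) - z = c • (z - w) := by abel
    rw [this, norm_smul, Real.norm_eq_abs, abs_of_pos hcpos]
    calc c * ‖z - w‖ ≤ c * (‖z - w‖ + 1) := by nlinarith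
      _ = δ / 2 := by rw [hc]; field_simp
      _ < δ := by linarith
  have key : (c / (1 + c)) • w + (1 / (1 + c)) • (z + c • (z - w)) = z := by
    have h1c : (1 : ℝ) + c ≠ 0 := by positivity
    match_scalars <;> field_simp <;> ring
  have := hs.combo_interior_closure_mem_interior hw hy
    (by positivity : 0 < c / (1 + c)) (by positivity : (0:ℝ) ≤ 1 / (1 + c))
    (by field_simp [add_comm]; ring)
  rwa [key] at this

/-- Combination of balls inside a convex set. -/
lemma aux_ball_combo {C : Set V} (hC : Convex ℝ C) {a b : V} {ra rb lam : ℝ}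
    (ha : a ∈ C) (hb : b ∈ C) (hra : 0 ≤ ra) (hrb : 0 ≤ rb)
    (hba : ball a ra ⊆ C) (hbb : ball b rb ⊆ C) (h0 : 0 ≤ lam) (h1 : lam ≤ 1) :
    ball (lam • a + (1 - lam) • b) (lam * ra + (1 - lam) * rb) ⊆ C := by
  intro z hz
  rw [mem_ball] at hz
  set r : ℝ := lam * ra + (1 - lam) * rb with hr
  have hrpos : 0 < r := lt_of_le_of_lt dist_nonneg hz
  set v : V := z - (lam • a + (1 - lam) • b) with hv
  have hvnorm : ‖v‖ < r := by rwa [dist_eq_norm] at hz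
  have memA : a + (ra / r) • v ∈ C := by
    rcases eq_or_lt_of_le hra with h | h
    · simpa [← h] using ha
    · apply hba
      rw [mem_ball, dist_eq_norm]
      have : a + (ra / r) • v - a = (ra / r) • v := by abel
      rw [this, norm_smul, Real.norm_eq_abs, abs_of_nonneg (by positivity)]
      calc ra / r * ‖v‖ < ra / r * r := by
            apply mul_lt_mul_of_pos_left hvnorm (by positivity)
        _ = ra := by field_simp
  have memB : b + (rb / r) • v ∈ C := by
    rcases eq_or_lt_of_le hrb with h | h
    · simpa [← h] using hb
    · apply hbb
      rw [mem_ball, dist_eq_norm]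
      have : b + (rb / r) • v - b = (rb / r) • v := by abel
      rw [this, norm_smul, Real.norm_eq_abs, abs_of_nonneg (by positivity)]
      calc rb / r * ‖v‖ < rb / r * r := by
            apply mul_lt_mul_of_pos_left hvnorm (by positivity)
        _ = rb := by field_simp
  have key : z = lam • (a + (ra / r) • v) + (1 - lam) • (b + (rb / r) • v) := by
    have hco : lam * (ra / r) + (1 - lam) * (rb / r) = 1 := by
      field_simp
      linarith [hr]
    have expand : lam • (a + (ra / r) • v) + (1 - lam) • (b + (rb / r) • v)
        = (lam • a + (1 - lam) • b) + (lam * (ra / r) + (1 - lam) * (rb / r)) • v := by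
      module
    rw [expand, hco, one_smul, hv]
    abel
  rw [key]
  exact hC memA memB h0 (by linarith) (by ring)

/-- For each point there is an almost-projection with a good ball. -/
lemma aux_exists_good {C : Set V} (hCne : C.Nonempty) (y : V) {ε : ℝ} (hε : 0 < ε) :
    ∃ y', y' ∈ C ∧ dist y y' ≤ infDist y C + ε ∧ ball y' (infDist y Cᶜ) ⊆ C := by
  by_cases hy : y ∈ C
  · refine ⟨y, hy, ?_, ball_infDist_compl_subset⟩
    rw [dist_self]
    have := infDist_nonneg (s := C) (x := y)
    linarith
  · have he : infDist y Cᶜ = 0 := infDist_zero_of_mem hy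
    obtain ⟨y', hy', hd⟩ := (infDist_lt_iff hCne).1
      (lt_add_of_pos_right (infDist y C) hε)
    exact ⟨y', hy', hd.le, by simp [he]⟩

/-- Concavity of the signed distance function of a closed convex set. -/
lemma aux_signed_concave {C : Set V} (hC : Convex ℝ C)
    (hne : C.Nonempty) (hcne : Cᶜ.Nonempty) (a b : V) (lam : ℝ)
    (h0 : 0 ≤ lam) (h1 : lam ≤ 1) :
    lam * (infDist a Cᶜ - infDist a C) + (1 - lam) * (infDist b Cᶜ - infDist b C)
      ≤ infDist (lam • a + (1 - lam) • b) Cᶜ - infDist (lam • a + (1 - lam) • b) C := by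
  refine le_of_forall_pos_le_add fun ε hε => ?_
  set c : V := lam • a + (1 - lam) • b with hcdef
  set ε1 : ℝ := ε / 2 with hε1
  have hε1pos : 0 < ε1 := by positivity
  obtain ⟨a', ha'C, ha'd, ha'b⟩ := aux_exists_good hne a hε1pos
  obtain ⟨b', hb'C, hb'd, hb'b⟩ := aux_exists_good hne b hε1pos
  set c' : V := lam • a' + (1 - lam) • b' with hc'def
  have hc'C : c' ∈ C := hC ha'C hb'C h0 (by linarith) (by ring)
  set da := infDist a C
  set db := infDist b C
  set ea := infDist a Cᶜ
  set eb := infDist b Cᶜ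
  have hda : 0 ≤ da := infDist_nonneg
  have hdb : 0 ≤ db := infDist_nonneg
  have hea : 0 ≤ ea := infDist_nonneg
  have heb : 0 ≤ eb := infDist_nonneg
  set r : ℝ := lam * ea + (1 - lam) * eb with hrdef
  have hr0 : 0 ≤ r := by
    apply add_nonneg <;> apply mul_nonneg <;> linarith
  have hdcc' : dist c c' ≤ lam * da + (1 - lam) * db + ε1 := by
    have hsplit : c - c' = lam • (a - a') + (1 - lam) • (b - b') := by
      rw [hcdef, hc'def]; module
    rw [dist_eq_norm, hsplit]
    calc ‖lam • (a - a') + (1 - lam) • (b - b')‖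
        ≤ ‖lam • (a - a')‖ + ‖(1 - lam) • (b - b')‖ := norm_add_le _ _
      _ = lam * dist a a' + (1 - lam) * dist b b' := by
          rw [norm_smul, norm_smul, Real.norm_eq_abs, Real.norm_eq_abs,
            abs_of_nonneg h0, abs_of_nonneg (by linarith : (0:ℝ) ≤ 1 - lam),
            dist_eq_norm, dist_eq_norm]
      _ ≤ lam * (da + ε1) + (1 - lam) * (db + ε1) := by
          have h1' : (0:ℝ) ≤ 1 - lam := by linarith
          have := mul_le_mul_of_nonneg_left ha'd h0
          have := mul_le_mul_of_nonneg_left hb'd h1'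
          linarith
      _ = lam * da + (1 - lam) * db + ε1 := by ring
  have hball : ball c' r ⊆ C :=
    aux_ball_combo hC ha'C hb'C hea heb ha'b hb'b h0 h1
  have hec' : r ≤ infDist c' Cᶜ := by
    by_contra h
    push_neg at h
    obtain ⟨z, hzc, hzd⟩ := (infDist_lt_iff hcne).1 h
    exact hzc (hball (by rwa [mem_ball, dist_comm]))
  have hec : r - dist c c' ≤ infDist c Cᶜ := by
    have := infDist_le_infDist_add_dist (x := c') (y := c) (s := Cᶜ)
    rw [dist_comm c' c] at this
    linarith
  -- goal : LHS ≤ f c + ε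
  have hLHS : lam * (ea - da) + (1 - lam) * (eb - db)
      = r - (lam * da + (1 - lam) * db) := by ring
  rcases lt_or_ge (dist c c') r with hlt | hge
  · -- c is inside C
    have hcC : c ∈ C := hball (mem_ball.2 hlt)
    have hdc : infDist c C = 0 := infDist_zero_of_mem hcC
    rw [hLHS, hdc]
    linarith
  · -- bound infDist c C from above
    have hdcC : infDist c C ≤ dist c c' - r + ε1 := by
      rcases eq_or_lt_of_le (dist_nonneg (x := c) (y := c')) with hd0 | hdpos
      · -- c = c'
        have hr0' : r = 0 := le_antisymm (le_trans hge hd0.symm.le) hr0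
        have : infDist c C ≤ dist c c' := infDist_le_dist_of_mem hc'C
        rw [hr0']
        linarith
      · set D : ℝ := dist c c' with hD
        set ρ : ℝ := max (r - ε1) 0 with hρ
        have hρ0 : 0 ≤ ρ := le_max_right _ _
        have hρr : ρ ≤ r := max_le (by linarith) hr0
        have hρD : ρ ≤ D := le_trans hρr hge
        set z : V := c' + (ρ / D) • (c - c') with hz
        have hzC : z ∈ C := by
          rcases le_or_gt (r - ε1) 0 with hcase | hcase
          · have : ρ = 0 := max_eq_right hcase
            simp only [hz, this, zero_div, zero_smul, add_zero]
            exact hc'C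
          · have hρeq : ρ = r - ε1 := max_eq_left hcase.le
            apply hball
            rw [mem_ball, dist_eq_norm]
            have : z - c' = (ρ / D) • (c - c') := by rw [hz]; abel
            rw [this, norm_smul, Real.norm_eq_abs,
              abs_of_nonneg (by positivity : (0:ℝ) ≤ ρ / D)]
            have hnorm : ‖c - c'‖ = D := by rw [hD, dist_eq_norm]
            rw [hnorm, div_mul_cancel₀ _ (ne_of_gt hdpos)]
            rw [hρeq]
            linarith
        have hdcz : dist c z = D - ρ := by
          rw [dist_eq_norm, hz]
          have : c - (c' + (ρ / D) • (c - c')) = (1 - ρ / D) • (c - c') := by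
            module
          rw [this, norm_smul, Real.norm_eq_abs]
          have h1' : 0 ≤ 1 - ρ / D := by
            rw [sub_nonneg, div_le_one hdpos]
            exact hρD
          rw [abs_of_nonneg h1']
          have hnorm : ‖c - c'‖ = D := by rw [hD, dist_eq_norm]
          rw [hnorm]
          field_simp
        have : infDist c C ≤ D - ρ := hdcz ▸ infDist_le_dist_of_mem hzC
        have hρge : r - ε1 ≤ ρ := le_max_left _ _
        linarith
    have hecnn : 0 ≤ infDist c Cᶜ := infDist_nonneg
    rw [hLHS]
    have : ε1 + ε1 = ε := by rw [hε1]; ring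
    linarith

end Aux

/-- ψ is concave on ℝ^p. -/
theorem stmt_2 (p t : ℕ) (hp : 1 ≤ p) (ht : 1 ≤ t)
    (x : Fin t → EuclideanSpace ℝ (Fin p)) (xk : EuclideanSpace ℝ (Fin p))
    (E : Set (EuclideanSpace ℝ (Fin p)))
    (hE : E = {z | ∃ (lam : Fin t → ℝ) (r : EuclideanSpace ℝ (Fin p)),
        (∀ j, 0 ≤ lam j) ∧ (∀ i, 0 ≤ r i) ∧ z = (∑ j, lam j • (x j - xk)) + r})
    (hEne : E ≠ Set.univ)
    (ψ : EuclideanSpace ℝ (Fin p) → ℝ)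
    (hψ : ∀ z, ψ z = Metric.infDist (z - xk) Eᶜ - Metric.infDist (z - xk) E) :
    ∀ (a b : EuclideanSpace ℝ (Fin p)) (lam : ℝ), 0 ≤ lam → lam ≤ 1 →
      lam * ψ a + (1 - lam) * ψ b ≤ ψ (lam • a + (1 - lam) • b) := by
  -- Basic properties of E
  have hconv : Convex ℝ E := by
    rw [hE]
    rintro z₁ ⟨l₁, r₁, hl₁, hr₁, hz₁⟩ z₂ ⟨l₂, r₂, hl₂, hr₂, hz₂⟩ μ ν hμ hν hμν
    refine ⟨fun j => μ * l₁ j + ν * l₂ j, μ • r₁ + ν • r₂,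
      fun j => add_nonneg (mul_nonneg hμ (hl₁ j)) (mul_nonneg hν (hl₂ j)),
      fun i => ?_, ?_⟩
    · have : (μ • r₁ + ν • r₂) i = μ * r₁ i + ν * r₂ i := rfl
      rw [this]
      exact add_nonneg (mul_nonneg hμ (hr₁ i)) (mul_nonneg hν (hr₂ i))
    · rw [hz₁, hz₂]
      have hsum : ∑ j, (μ * l₁ j + ν * l₂ j) • (x j - xk)
          = μ • (∑ j, l₁ j • (x j - xk)) + ν • (∑ j, l₂ j • (x j - xk)) := by
        rw [Finset.smul_sum, Finset.smul_sum, ← Finset.sum_add_distrib]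
        congr 1
        ext j
        rw [smul_smul, smul_smul, ← add_smul]
      rw [hsum]
      module
  -- interior of E is nonempty
  have hint : ((WithLp.toLp 2 (fun _ => 1) : EuclideanSpace ℝ (Fin p))) ∈ interior E := by
    rw [mem_interior]
    refine ⟨{z : EuclideanSpace ℝ (Fin p) | ∀ i, 0 < z i}, ?_, ?_, fun i => one_pos⟩
    · intro z hz
      rw [hE]
      refine ⟨fun _ => 0, z, fun j => le_rfl, fun i => (hz i).le, ?_⟩
      simp
    · have : {z : EuclideanSpace ℝ (Fin p) | ∀ i, 0 < z i}
          = ⋂ i, {z : EuclideanSpace ℝ (Fin p) | 0 < z i} := by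
        ext z; simp
      rw [this]
      exact isOpen_iInter_of_finite fun i =>
        isOpen_lt continuous_const (EuclideanSpace.proj i).continuous
  have hintC : interior (closure E) ⊆ interior E :=
    aux_interior_closure_subset hconv hint
  -- closure E is a proper subset
  have hCproper : (closure E)ᶜ.Nonempty := by
    rw [nonempty_compl]
    intro h
    apply hEne
    rw [eq_univ_iff_forall]
    intro z
    have : z ∈ interior (closure E) := by rw [h]; simp
    exact interior_subset (hintC this)
  have hCne : (closure E).Nonempty := ⟨_, subset_closure (interior_subset hint)⟩
  -- distances to E and Eᶜ coincide with distances to closure E and its complement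
  have hdist1 : ∀ y, infDist y E = infDist y (closure E) := fun y =>
    (infDist_closure).symm
  have hdist2 : ∀ y, infDist y Eᶜ = infDist y (closure E)ᶜ := by
    intro y
    apply le_antisymm
    · exact infDist_le_infDist_of_subset
        (compl_subset_compl.2 subset_closure) hCproper
    · have hsub : Eᶜ ⊆ closure ((closure E)ᶜ) := by
        intro z hz
        rw [closure_compl]
        intro hmem
        exact hz (interior_subset (hintC hmem))
      calc infDist y (closure E)ᶜ = infDist y (closure ((closure E)ᶜ)) :=
            infDist_closure.symm
        _ ≤ infDist y Eᶜ := infDist_le_infDist_of_subset hsub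
            (hCproper.mono (compl_subset_compl.2 subset_closure))
  intro a b lam h0 h1
  rw [hψ, hψ, hψ]
  have harg : lam • a + (1 - lam) • b - xk
      = lam • (a - xk) + (1 - lam) • (b - xk) := by module
  rw [harg, hdist1, hdist1, hdist1, hdist2, hdist2, hdist2]
  exact aux_signed_concave hconv.closure hCne hCproper
    (a - xk) (b - xk) lam h0 h1
end

section
/- The function ψ is increasing with respect to the cone E: for all x_1, x_2 ∈ ℝ^p, if x_2 − x_1 ∈ E then ψ(x_1) ≤ ψ(x_2). -/
open Metric Set Pointwise

/-- ψ is increasing with respect to the cone E. -/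
theorem stmt_3 (p t : ℕ) (hp : 1 ≤ p) (ht : 1 ≤ t)
    (x : Fin t → EuclideanSpace ℝ (Fin p)) (xk : EuclideanSpace ℝ (Fin p))
    (E : Set (EuclideanSpace ℝ (Fin p)))
    (hE : E = {z | ∃ (lam : Fin t → ℝ) (r : EuclideanSpace ℝ (Fin p)),
        (∀ j, 0 ≤ lam j) ∧ (∀ i, 0 ≤ r i) ∧ z = (∑ j, lam j • (x j - xk)) + r})
    (hEne : E ≠ Set.univ)
    (ψ : EuclideanSpace ℝ (Fin p) → ℝ)
    (hψ : ∀ z, ψ z = Metric.infDist (z - xk) Eᶜ - Metric.infDist (z - xk) E) :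
    ∀ a b : EuclideanSpace ℝ (Fin p), b - a ∈ E → ψ a ≤ ψ b := by
  intro a b hba
  have hadd : ∀ u v : EuclideanSpace ℝ (Fin p), u ∈ E → v ∈ E → u + v ∈ E := by
    intro u v hu hv
    rw [hE] at hu hv ⊢
    obtain ⟨l1, r1, hl1, hr1, hu⟩ := hu
    obtain ⟨l2, r2, hl2, hr2, hv⟩ := hv
    refine ⟨l1 + l2, r1 + r2, fun j => add_nonneg (hl1 j) (hl2 j),
      fun i => ?_, ?_⟩
    · simpa using add_nonneg (hr1 i) (hr2 i)
    · subst hu hv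
      simp only [Pi.add_apply, add_smul, Finset.sum_add_distrib]
      abel
  have hEne' : E.Nonempty :=
    ⟨0, by rw [hE]; exact ⟨0, 0, fun j => le_rfl, fun i => le_rfl, by simp⟩⟩
  have hEc : Eᶜ.Nonempty := by rwa [Set.nonempty_compl]
  rw [hψ, hψ]
  have h1 : Metric.infDist (b - xk) E ≤ Metric.infDist (a - xk) E := by
    by_contra hcon
    push_neg at hcon
    obtain ⟨y, hy, hlt⟩ := (Metric.infDist_lt_iff hEne').1 hcon
    have hmem : y + (b - a) ∈ E := hadd y (b - a) hy hba
    have hd : dist (a - xk) y = dist (b - xk) (y + (b - a)) := by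
      rw [dist_eq_norm, dist_eq_norm]; congr 1; abel
    have := Metric.infDist_le_dist_of_mem (x := b - xk) hmem
    rw [← hd] at this
    linarith
  have h2 : Metric.infDist (a - xk) Eᶜ ≤ Metric.infDist (b - xk) Eᶜ := by
    by_contra hcon
    push_neg at hcon
    obtain ⟨y, hy, hlt⟩ := (Metric.infDist_lt_iff hEc).1 hcon
    have hmem : y - (b - a) ∈ Eᶜ := by
      intro hc
      exact hy (by simpa using hadd _ _ hc hba)
    have hd : dist (b - xk) y = dist (a - xk) (y - (b - a)) := by
      rw [dist_eq_norm, dist_eq_norm]; congr 1; abel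
    have := Metric.infDist_le_dist_of_mem (x := a - xk) hmem
    rw [← hd] at this
    linarith
  linarith
end

section
/- The function ψ is strictly increasing with respect to the interior of the cone E: for all x_1, x_2 ∈ ℝ^p, if x_2 − x_1 lies in the interior of E then ψ(x_1) < ψ(x_2). -/
open Metric Set Pointwise

/-- If a ball `ball C ε` is contained in `S` and `P` is at distance at least `ε`
from `C`, then `infDist P S ≤ ‖P - C‖ - ε/2`. -/
lemma stmt4_trick {X : Type*} [NormedAddCommGroup X] [NormedSpace ℝ X]
    (S : Set X) (P C : X) (ε : ℝ) (hε : 0 < ε)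
    (hball : Metric.ball C ε ⊆ S) (hR : ε ≤ ‖P - C‖) :
    Metric.infDist P S ≤ ‖P - C‖ - ε / 2 := by
  set R := ‖P - C‖ with hRdef
  have hR0 : 0 < R := lt_of_lt_of_le hε hR
  set s : ℝ := (ε / 2) / R with hsdef
  have hs0 : 0 ≤ s := by positivity
  have hsR : s * R = ε / 2 := by
    rw [hsdef]; field_simp
  have hs1 : s ≤ 1 := by
    rw [hsdef, div_le_one hR0]; linarith
  have hq : C + s • (P - C) ∈ S := by
    apply hball
    rw [Metric.mem_ball, dist_eq_norm]
    have h1 : C + s • (P - C) - C = s • (P - C) := by abel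
    rw [h1, norm_smul, Real.norm_of_nonneg hs0, ← hRdef, hsR]
    linarith
  have hle := Metric.infDist_le_dist_of_mem (x := P) hq
  have heq : dist P (C + s • (P - C)) = (1 - s) * R := by
    rw [dist_eq_norm]
    have h2 : P - (C + s • (P - C)) = (1 - s) • (P - C) := by
      rw [sub_smul, one_smul]; abel
    rw [h2, norm_smul, Real.norm_of_nonneg (by linarith), ← hRdef]
  rw [heq] at hle
  nlinarith


lemma stmt4_le_infDist {α : Type*} [PseudoMetricSpace α] {s : Set α}
    (hs : s.Nonempty) {x : α} {c : ℝ} (h : ∀ y ∈ s, c ≤ dist x y) :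
    c ≤ Metric.infDist x s := by
  by_contra hlt
  push_neg at hlt
  obtain ⟨y, hy, hd⟩ := (Metric.infDist_lt_iff hs).mp hlt
  exact absurd (h y hy) (not_le.mpr hd)

/-- ψ is strictly increasing with respect to the interior of E. -/
theorem stmt_4 (p t : ℕ) (hp : 1 ≤ p) (ht : 1 ≤ t)
    (x : Fin t → EuclideanSpace ℝ (Fin p)) (xk : EuclideanSpace ℝ (Fin p))
    (E : Set (EuclideanSpace ℝ (Fin p)))
    (hE : E = {z | ∃ (lam : Fin t → ℝ) (r : EuclideanSpace ℝ (Fin p)),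
        (∀ j, 0 ≤ lam j) ∧ (∀ i, 0 ≤ r i) ∧ z = (∑ j, lam j • (x j - xk)) + r})
    (hEne : E ≠ Set.univ)
    (ψ : EuclideanSpace ℝ (Fin p) → ℝ)
    (hψ : ∀ z, ψ z = Metric.infDist (z - xk) Eᶜ - Metric.infDist (z - xk) E) :
    ∀ a b : EuclideanSpace ℝ (Fin p), b - a ∈ interior E → ψ a < ψ b := by
  -- E is closed under addition
  have hEadd : ∀ y ∈ E, ∀ z ∈ E, y + z ∈ E := by
    rw [hE]
    rintro y ⟨l1, r1, h1, h1', rfl⟩ z ⟨l2, r2, h2, h2', rfl⟩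
    refine ⟨l1 + l2, r1 + r2, fun j => add_nonneg (h1 j) (h2 j),
      fun i => add_nonneg (h1' i) (h2' i), ?_⟩
    simp only [Pi.add_apply, add_smul, Finset.sum_add_distrib]
    abel
  have h0E : (0 : EuclideanSpace ℝ (Fin p)) ∈ E := by
    rw [hE]
    refine ⟨0, 0, fun j => le_refl 0, fun i => le_of_eq ?_, by simp⟩
    simp
  have hEc_ne : Eᶜ.Nonempty := Set.nonempty_compl.mpr hEne
  have hEne' : E.Nonempty := ⟨0, h0E⟩
  intro a b hmem
  set u := a - xk with hu
  set v := b - xk with hv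
  set d := b - a with hd
  have hvud : v = u + d := by rw [hu, hv, hd]; abel
  have hdE : d ∈ E := interior_subset hmem
  rw [mem_interior_iff_mem_nhds, Metric.mem_nhds_iff] at hmem
  obtain ⟨ε, hε, hball⟩ := hmem
  -- the complement is stable under subtracting elements near d
  have hcompl_ball : ∀ w ∈ Eᶜ, Metric.ball (w - d) ε ⊆ Eᶜ := by
    intro w hw y hy hyE
    apply hw
    have h1 : w - y ∈ Metric.ball d ε := by
      rw [Metric.mem_ball, dist_eq_norm] at hy ⊢
      have : w - y - d = -(y - (w - d)) := by abel
      rw [this, norm_neg]; exact hy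
    have := hEadd y hyE (w - y) (hball h1)
    simpa using this
  by_cases huE : u ∈ E
  · -- case 1 : u ∈ E
    have hvE : v ∈ E := by rw [hvud]; exact hEadd u huE d hdE
    have key : ∀ w ∈ Eᶜ, Metric.infDist u Eᶜ + ε / 2 ≤ dist v w := by
      intro w hw
      have hb := hcompl_ball w hw
      have hR : ε ≤ ‖u - (w - d)‖ := by
        by_contra h
        push_neg at h
        exact (hb (Metric.mem_ball.mpr (by rw [dist_eq_norm]; exact h))) huE
      have htr := stmt4_trick Eᶜ u (w - d) ε hε hb hR
      have heq : ‖u - (w - d)‖ = dist v w := by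
        rw [dist_eq_norm]
        congr 1
        rw [hvud]; abel
      rw [heq] at htr
      linarith
    have h1 : Metric.infDist u Eᶜ + ε / 2 ≤ Metric.infDist v Eᶜ :=
      stmt4_le_infDist hEc_ne key
    rw [hψ a, hψ b, ← hu, ← hv, Metric.infDist_zero_of_mem huE,
      Metric.infDist_zero_of_mem hvE]
    linarith
  · -- u ∉ E
    have huc : u ∈ Eᶜ := huE
    have hdu0 : Metric.infDist u Eᶜ = 0 := Metric.infDist_zero_of_mem huc
    rcases eq_or_lt_of_le (Metric.infDist_nonneg (x := u) (s := E)) with h0 | h0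
    · -- infDist u E = 0
      have hball2 : Metric.ball v (ε / 2) ⊆ E := by
        intro y hy
        rw [Metric.mem_ball, dist_eq_norm] at hy
        have hlt : Metric.infDist u E < ε - ‖y - v‖ := by
          rw [← h0]; linarith
        obtain ⟨e, heE, he⟩ := (Metric.infDist_lt_iff hEne').mp hlt
        rw [dist_eq_norm] at he
        have h1 : y - e ∈ Metric.ball d ε := by
          rw [Metric.mem_ball, dist_eq_norm]
          have h2 : y - e - d = (y - v) + (u - e) := by rw [hvud]; abel
          calc ‖y - e - d‖ = ‖(y - v) + (u - e)‖ := by rw [h2]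
            _ ≤ ‖y - v‖ + ‖u - e‖ := norm_add_le _ _
            _ < ε := by linarith
        have := hEadd e heE (y - e) (hball h1)
        simpa using this
      have hvE : v ∈ E := hball2 (Metric.mem_ball_self (by linarith))
      have h2 : ε / 2 ≤ Metric.infDist v Eᶜ := by
        apply stmt4_le_infDist hEc_ne
        intro w hw
        by_contra hlt
        push_neg at hlt
        exact hw (hball2 (by rw [Metric.mem_ball, dist_comm]; exact hlt))
      rw [hψ a, hψ b, ← hu, ← hv, hdu0, ← h0, Metric.infDist_zero_of_mem hvE]
      linarith
    · -- infDist u E > 0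
      by_cases hvE : v ∈ E
      · rw [hψ a, hψ b, ← hu, ← hv, hdu0, Metric.infDist_zero_of_mem hvE]
        have : (0 : ℝ) ≤ Metric.infDist v Eᶜ := Metric.infDist_nonneg
        linarith
      · obtain ⟨e, heE, he⟩ := (Metric.infDist_lt_iff hEne').mp
          (show Metric.infDist u E < Metric.infDist u E + ε / 2 by linarith)
        rw [dist_eq_norm] at he
        have hb : Metric.ball (e + d) ε ⊆ E := by
          intro y hy
          rw [Metric.mem_ball, dist_eq_norm] at hy
          have h1 : y - e ∈ Metric.ball d ε := by
            rw [Metric.mem_ball, dist_eq_norm]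
            have : y - e - d = y - (e + d) := by abel
            rw [this]; exact hy
          have := hEadd e heE (y - e) (hball h1)
          simpa using this
        have hR : ε ≤ ‖v - (e + d)‖ := by
          by_contra h
          push_neg at h
          exact hvE (hb (by rw [Metric.mem_ball, dist_eq_norm]; exact h))
        have htr := stmt4_trick E v (e + d) ε hε hb hR
        have heq : ‖v - (e + d)‖ = ‖u - e‖ := by
          congr 1
          rw [hvud]; abel
        rw [heq] at htr
        have h3 : Metric.infDist v E < Metric.infDist u E := by linarith
        have h4 : Metric.infDist u Eᶜ ≤ Metric.infDist v Eᶜ := by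
          apply stmt4_le_infDist hEc_ne
          intro w hw
          have hw' : w - d ∈ Eᶜ := by
            intro hcon
            apply hw
            have := hEadd (w - d) hcon d hdE
            simpa using this
          have hle := Metric.infDist_le_dist_of_mem (x := u) hw'
          have heq2 : dist u (w - d) = dist v w := by
            rw [dist_eq_norm, dist_eq_norm]
            congr 1
            rw [hvud]; abel
          rw [heq2] at hle
          linarith
        rw [hψ a, hψ b, ← hu, ← hv]
        linarith
end

section
/- The function ψ is continuous, quasi-concave (ψ(λx + (1−λ)y) ≥ min{ψ(x), ψ(y)} for all x, y ∈ ℝ^p and λ ∈ [0,1]), increasing with respect to the componentwise order (x ≤ y componentwise implies ψ(x) ≤ ψ(y)), satisfies ψ(x_k) = 0, and satisfies ψ(x_j) ≥ ψ(x_k) for all j = 1, …, t. -/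
open Metric Set Pointwise

set_option linter.unusedSectionVars false

section Aux

variable {V : Type*} [NormedAddCommGroup V] [NormedSpace ℝ V]

/-- comparison of infDists via a distance-nonincreasing correspondence -/
lemma infDist_le_of_map {s s' : Set V} (hs : s.Nonempty) {x x' : V}
    (h : ∀ w ∈ s, ∃ w' ∈ s', dist x' w' ≤ dist x w) :
    infDist x' s' ≤ infDist x s := by
  by_contra hc
  push_neg at hc
  obtain ⟨w, hw, hd⟩ := (Metric.infDist_lt_iff hs).mp hc
  obtain ⟨w', hw', hd'⟩ := h w hw
  exact absurd ((Metric.infDist_le_dist_of_mem hw').trans hd') (not_le.mpr hd)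

lemma dist_combo_le {u v eu ev : V} {l : ℝ} (h0 : 0 ≤ l) (h1 : l ≤ 1) :
    dist (l • u + (1 - l) • v) (l • eu + (1 - l) • ev)
      ≤ l * dist u eu + (1 - l) * dist v ev := by
  have h2 : (0:ℝ) ≤ 1 - l := by linarith
  rw [dist_eq_norm, dist_eq_norm, dist_eq_norm]
  have : l • u + (1 - l) • v - (l • eu + (1 - l) • ev)
      = l • (u - eu) + (1 - l) • (v - ev) := by module
  rw [this]
  calc ‖l • (u - eu) + (1 - l) • (v - ev)‖
      ≤ ‖l • (u - eu)‖ + ‖(1 - l) • (v - ev)‖ := norm_add_le _ _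
    _ = l * ‖u - eu‖ + (1 - l) * ‖v - ev‖ := by
        rw [norm_smul, norm_smul, Real.norm_eq_abs, Real.norm_eq_abs,
          abs_of_nonneg h0, abs_of_nonneg h2]

lemma infDist_convex {E : Set V} (hconv : Convex ℝ E) (hne : E.Nonempty)
    {u v : V} {l : ℝ} (h0 : 0 ≤ l) (h1 : l ≤ 1) :
    infDist (l • u + (1 - l) • v) E ≤ l * infDist u E + (1 - l) * infDist v E := by
  have h2 : (0:ℝ) ≤ 1 - l := by linarith
  refine le_of_forall_pos_le_add fun ε hε => ?_
  obtain ⟨eu, heu, hdu⟩ := (Metric.infDist_lt_iff hne).mp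
    (lt_add_of_pos_right (infDist u E) hε)
  obtain ⟨ev, hev, hdv⟩ := (Metric.infDist_lt_iff hne).mp
    (lt_add_of_pos_right (infDist v E) hε)
  have hm : l • eu + (1 - l) • ev ∈ E := hconv heu hev h0 h2 (by ring)
  calc infDist (l • u + (1 - l) • v) E ≤ dist (l • u + (1 - l) • v) (l • eu + (1 - l) • ev) :=
        Metric.infDist_le_dist_of_mem hm
    _ ≤ l * dist u eu + (1 - l) * dist v ev := dist_combo_le h0 h1
    _ ≤ l * (infDist u E + ε) + (1 - l) * (infDist v E + ε) := by
        gcongr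
    _ = l * infDist u E + (1 - l) * infDist v E + ε := by ring

/-- core quasiconcavity of the signed distance to a convex set -/
lemma signedDist_quasiconcave {E : Set V} (hconv : Convex ℝ E) (hne : E.Nonempty)
    (hnec : Eᶜ.Nonempty) (u v : V) {l : ℝ} (h0 : 0 ≤ l) (h1 : l ≤ 1) :
    min (infDist u Eᶜ - infDist u E) (infDist v Eᶜ - infDist v E)
      ≤ infDist (l • u + (1 - l) • v) Eᶜ - infDist (l • u + (1 - l) • v) E := by
  set f : V → ℝ := fun z => infDist z Eᶜ - infDist z E with hf
  have h2 : (0:ℝ) ≤ 1 - l := by linarith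
  set w := l • u + (1 - l) • v with hwdef
  have hneg : ∀ z : V, z ∉ E → f z = -infDist z E := by
    intro z hz
    simp [hf, Metric.infDist_zero_of_mem (show z ∈ Eᶜ from hz)]
  have hpos : ∀ z : V, z ∈ E → f z = infDist z Eᶜ := by
    intro z hz
    simp [hf, Metric.infDist_zero_of_mem hz]
  show min (f u) (f v) ≤ f w
  by_cases hw : w ∈ E
  · by_cases hmin : min (f u) (f v) ≤ 0
    · refine hmin.trans ?_
      rw [hpos w hw]
      exact Metric.infDist_nonneg
    · push_neg at hmin
      have hfu : 0 < f u := lt_min_iff.mp hmin |>.1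
      have hfv : 0 < f v := lt_min_iff.mp hmin |>.2
      have hu : u ∈ E := by
        by_contra h
        rw [hneg u h] at hfu
        have := Metric.infDist_nonneg (x := u) (s := E); linarith
      have hv : v ∈ E := by
        by_contra h
        rw [hneg v h] at hfv
        have := Metric.infDist_nonneg (x := v) (s := E); linarith
      rw [hpos w hw, hpos u hu, hpos v hv]
      by_contra hcon
      push_neg at hcon
      obtain ⟨y, hy, hdy⟩ := (Metric.infDist_lt_iff hnec).mp hcon
      have hdu : dist u (u + (y - w)) < infDist u Eᶜ := by
        have : dist u (u + (y - w)) = dist w y := by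
          rw [dist_eq_norm, dist_eq_norm]; congr 1; abel
        rw [this]
        refine hdy.trans_le ?_
        rw [← hpos u hu]; exact min_le_left _ _
      have hdv : dist v (v + (y - w)) < infDist v Eᶜ := by
        have : dist v (v + (y - w)) = dist w y := by
          rw [dist_eq_norm, dist_eq_norm]; congr 1; abel
        rw [this]
        refine hdy.trans_le ?_
        rw [← hpos v hv]; exact min_le_right _ _
      have hue : u + (y - w) ∈ E := by
        by_contra h
        exact absurd (Metric.infDist_le_dist_of_mem (show u + (y - w) ∈ Eᶜ from h))
          (not_le.mpr hdu)
      have hve : v + (y - w) ∈ E := by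
        by_contra h
        exact absurd (Metric.infDist_le_dist_of_mem (show v + (y - w) ∈ Eᶜ from h))
          (not_le.mpr hdv)
      have hmem : l • (u + (y - w)) + (1 - l) • (v + (y - w)) ∈ E :=
        hconv hue hve h0 h2 (by ring)
      have hy' : l • (u + (y - w)) + (1 - l) • (v + (y - w)) = y := by
        rw [hwdef]; module
      rw [hy'] at hmem
      exact hy hmem
  · rw [hneg w hw]
    have hM0 : min (f u) (f v) ≤ 0 := by
      by_contra h
      push_neg at h
      have hfu : 0 < f u := lt_min_iff.mp h |>.1
      have hfv : 0 < f v := lt_min_iff.mp h |>.2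
      have hu : u ∈ E := by
        by_contra hh
        rw [hneg u hh] at hfu
        have := Metric.infDist_nonneg (x := u) (s := E); linarith
      have hv : v ∈ E := by
        by_contra hh
        rw [hneg v hh] at hfv
        have := Metric.infDist_nonneg (x := v) (s := E); linarith
      exact hw (hconv hu hv h0 h2 (by ring))
    have hgu : infDist u E ≤ -min (f u) (f v) := by
      by_cases hu : u ∈ E
      · rw [Metric.infDist_zero_of_mem hu]; linarith
      · have h1' := hneg u hu
        have h2' := min_le_left (f u) (f v)
        linarith
    have hgv : infDist v E ≤ -min (f u) (f v) := by
      by_cases hv : v ∈ E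
      · rw [Metric.infDist_zero_of_mem hv]; linarith
      · have h1' := hneg v hv
        have h2' := min_le_right (f u) (f v)
        linarith
    have hcx := infDist_convex hconv hne h0 h1 (u := u) (v := v)
    nlinarith [mul_le_mul_of_nonneg_left hgu h0, mul_le_mul_of_nonneg_left hgv h2]

end Aux

/-- ψ is continuous, quasi-concave, increasing w.r.t. the componentwise
order, satisfies ψ(x_k) = 0, and ψ(x_j) ≥ ψ(x_k) for all j. -/
theorem stmt_5 (p t : ℕ) (hp : 1 ≤ p) (ht : 1 ≤ t)
    (x : Fin t → EuclideanSpace ℝ (Fin p)) (xk : EuclideanSpace ℝ (Fin p))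
    (E : Set (EuclideanSpace ℝ (Fin p)))
    (hE : E = {z | ∃ (lam : Fin t → ℝ) (r : EuclideanSpace ℝ (Fin p)),
        (∀ j, 0 ≤ lam j) ∧ (∀ i, 0 ≤ r i) ∧ z = (∑ j, lam j • (x j - xk)) + r})
    (hEne : E ≠ Set.univ)
    (ψ : EuclideanSpace ℝ (Fin p) → ℝ)
    (hψ : ∀ z, ψ z = Metric.infDist (z - xk) Eᶜ - Metric.infDist (z - xk) E) :
    Continuous ψ ∧
    (∀ (a b : EuclideanSpace ℝ (Fin p)) (lam : ℝ), 0 ≤ lam → lam ≤ 1 →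
      min (ψ a) (ψ b) ≤ ψ (lam • a + (1 - lam) • b)) ∧
    (∀ a b : EuclideanSpace ℝ (Fin p), (∀ i, a i ≤ b i) → ψ a ≤ ψ b) ∧
    ψ xk = 0 ∧
    (∀ j : Fin t, ψ xk ≤ ψ (x j)) := by
  -- basic membership facts about E
  have hEmem0 : (0 : EuclideanSpace ℝ (Fin p)) ∈ E := by
    rw [hE]
    exact ⟨0, 0, fun j => le_rfl, fun i => le_rfl, by simp⟩
  have hne : E.Nonempty := ⟨0, hEmem0⟩
  have hnec : Eᶜ.Nonempty := Set.nonempty_compl.mpr hEne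
  have hconv : Convex ℝ E := by
    rw [hE]
    rintro z1 ⟨l1, r1, hl1, hr1, rfl⟩ z2 ⟨l2, r2, hl2, hr2, rfl⟩ a b ha hb hab
    refine ⟨a • l1 + b • l2, a • r1 + b • r2, ?_, ?_, ?_⟩
    · intro j
      simp only [Pi.add_apply, Pi.smul_apply, smul_eq_mul]
      exact add_nonneg (mul_nonneg ha (hl1 j)) (mul_nonneg hb (hl2 j))
    · intro i
      simp only [PiLp.add_apply, PiLp.smul_apply, smul_eq_mul]
      exact add_nonneg (mul_nonneg ha (hr1 i)) (mul_nonneg hb (hr2 i))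
    · have key : ∀ j : Fin t, ((a • l1 + b • l2) j) • (x j - xk)
          = a • (l1 j • (x j - xk)) + b • (l2 j • (x j - xk)) := by
        intro j
        simp only [Pi.add_apply, Pi.smul_apply, smul_eq_mul, add_smul, smul_smul]
      rw [Finset.sum_congr rfl (fun j _ => key j), Finset.sum_add_distrib,
        ← Finset.smul_sum, ← Finset.smul_sum]
      simp only [smul_add]
      abel
  have hcone : ∀ (c : ℝ), 0 ≤ c → ∀ z ∈ E, c • z ∈ E := by
    intro c hc z hz
    rw [hE] at hz ⊢
    obtain ⟨l, r, hl, hr, rfl⟩ := hz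
    refine ⟨c • l, c • r, fun j => mul_nonneg hc (hl j), fun i => ?_, ?_⟩
    · simp only [PiLp.smul_apply, smul_eq_mul]
      exact mul_nonneg hc (hr i)
    · rw [smul_add, Finset.smul_sum]
      congr 1
      refine Finset.sum_congr rfl fun j _ => ?_
      simp only [Pi.smul_apply, smul_eq_mul, smul_smul]
  have hadd : ∀ z ∈ E, ∀ d : EuclideanSpace ℝ (Fin p), (∀ i, 0 ≤ d i) → z + d ∈ E := by
    intro z hz d hd
    rw [hE] at hz ⊢
    obtain ⟨l, r, hl, hr, rfl⟩ := hz
    refine ⟨l, r + d, hl, fun i => ?_, by rw [add_assoc]⟩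
    simp only [PiLp.add_apply]
    exact add_nonneg (hr i) (hd i)
  have hmemj : ∀ j : Fin t, x j - xk ∈ E := by
    intro j
    rw [hE]
    refine ⟨fun j' => if j' = j then 1 else 0, 0, fun j' => by positivity, fun i => le_rfl, ?_⟩
    simp [ite_smul]
  -- ψ(xk) = 0
  have hψk : ψ xk = 0 := by
    rw [hψ, sub_self, Metric.infDist_zero_of_mem hEmem0, sub_zero]
    rw [← Metric.mem_closure_iff_infDist_zero hnec]
    obtain ⟨y, hy⟩ := hnec
    have hy0 : y ≠ 0 := fun h => hy (h ▸ hEmem0)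
    have hny : (0:ℝ) < ‖y‖ := norm_pos_iff.mpr hy0
    rw [Metric.mem_closure_iff]
    intro ε hε
    set c : ℝ := ε / (2 * ‖y‖) with hcdef
    have hcpos : 0 < c := by positivity
    refine ⟨c • y, ?_, ?_⟩
    · intro h
      have : c⁻¹ • (c • y) ∈ E := hcone c⁻¹ (by positivity) _ h
      rw [smul_smul, inv_mul_cancel₀ (ne_of_gt hcpos), one_smul] at this
      exact hy this
    · rw [dist_zero_left, norm_smul, Real.norm_eq_abs, abs_of_pos hcpos]
      have : c * ‖y‖ = ε / 2 := by
        rw [hcdef]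
        field_simp
      rw [this]
      linarith
  refine ⟨?_, ?_, ?_, hψk, ?_⟩
  · -- continuity
    have hψeq : ψ = fun z => Metric.infDist (z - xk) Eᶜ - Metric.infDist (z - xk) E :=
      funext hψ
    rw [hψeq]
    exact ((Metric.continuous_infDist_pt _).comp (continuous_sub_right xk)).sub
      ((Metric.continuous_infDist_pt _).comp (continuous_sub_right xk))
  · -- quasiconcavity
    intro a b lam h0 h1
    rw [hψ a, hψ b, hψ]
    have hw : (lam • a + (1 - lam) • b) - xk = lam • (a - xk) + (1 - lam) • (b - xk) := by
      module
    rw [hw]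
    exact signedDist_quasiconcave hconv hne hnec _ _ h0 h1
  · -- monotonicity
    intro a b hab
    rw [hψ a, hψ b]
    have hd : ∀ i, (0:ℝ) ≤ (b - a) i := by
      intro i
      simp only [PiLp.sub_apply]
      exact sub_nonneg.mpr (hab i)
    have h1 : Metric.infDist (b - xk) E ≤ Metric.infDist (a - xk) E := by
      refine infDist_le_of_map hne fun w hw => ⟨w + (b - a), hadd w hw _ hd, le_of_eq ?_⟩
      rw [dist_eq_norm, dist_eq_norm]
      congr 1
      abel
    have h2 : Metric.infDist (a - xk) Eᶜ ≤ Metric.infDist (b - xk) Eᶜ := by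
      refine infDist_le_of_map hnec fun w hw => ⟨w - (b - a), ?_, le_of_eq ?_⟩
      · intro h
        have : (w - (b - a)) + (b - a) ∈ E := hadd _ h _ hd
        rw [sub_add_cancel] at this
        exact hw this
      · rw [dist_eq_norm, dist_eq_norm]
        congr 1
        abel
    linarith
  · -- ψ(x j) ≥ ψ(xk)
    intro j
    rw [hψk, hψ, Metric.infDist_zero_of_mem (hmemj j), sub_zero]
    exact Metric.infDist_nonneg
end

section
/- Let C ⊆ ℝ^p be a nonempty closed convex set with C ≠ ℝ^p. Then the function φ : ℝ^p → ℝ defined by φ(y) := dist(y, ℝ^p ∖ C) − dist(y, C) is concave. -/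
open Metric Set RealInnerProductSpace

/-- Upper bound for the signed distance via any halfspace containing C. -/
lemma stmt6_auxA {E : Type*} [NormedAddCommGroup E] [InnerProductSpace ℝ E] {C : Set E}
    (hne : C.Nonempty) (u : E) (hu : ‖u‖ = 1) (c : ℝ) (hC : ∀ x ∈ C, ⟪x, u⟫ ≤ c) (y : E) :
    infDist y Cᶜ - infDist y C ≤ c - ⟪y, u⟫ := by
  rcases le_or_gt (⟪y, u⟫) c with h | h
  · have h2 : infDist y Cᶜ ≤ c - ⟪y, u⟫ := by
      refine le_of_forall_pos_le_add (fun ε hε => ?_)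
      have hz : y + (c - ⟪y, u⟫ + ε) • u ∈ Cᶜ := by
        intro hzC
        have h3 := hC _ hzC
        rw [inner_add_left, real_inner_smul_left, real_inner_self_eq_norm_sq, hu] at h3
        nlinarith
      calc infDist y Cᶜ ≤ dist y (y + (c - ⟪y, u⟫ + ε) • u) := infDist_le_dist_of_mem hz
        _ = c - ⟪y, u⟫ + ε := by
            rw [dist_eq_norm]
            simp [norm_smul, hu, abs_of_nonneg (by linarith : (0:ℝ) ≤ c - ⟪y, u⟫ + ε)]
    linarith [infDist_nonneg (s := C) (x := y)]
  · have hyC : y ∈ Cᶜ := fun hy => absurd (hC y hy) (not_le.2 h)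
    have h2 : infDist y Cᶜ = 0 := infDist_zero_of_mem hyC
    have h3 : ⟪y, u⟫ - c ≤ infDist y C := by
      rw [infDist_eq_iInf]
      haveI : Nonempty C := hne.to_subtype
      refine le_ciInf fun z => ?_
      obtain ⟨x, hx⟩ := z
      have h4 : ⟪y - x, u⟫ ≤ ‖y - x‖ := by
        calc ⟪y - x, u⟫ ≤ ‖y - x‖ * ‖u‖ := real_inner_le_norm _ _
          _ = ‖y - x‖ := by rw [hu, mul_one]
      rw [inner_sub_left] at h4
      have := hC x hx
      rw [dist_eq_norm]
      linarith
    linarith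

/-- Convexity of the distance to a convex set. -/
lemma stmt6_auxConv {E : Type*} [NormedAddCommGroup E] [NormedSpace ℝ E] [ProperSpace E]
    {C : Set E} (hne : C.Nonempty) (hcl : IsClosed C) (hconv : Convex ℝ C)
    (a b : E) (lam : ℝ) (h0 : 0 ≤ lam) (h1 : lam ≤ 1) :
    infDist (lam • a + (1 - lam) • b) C ≤ lam * infDist a C + (1 - lam) * infDist b C := by
  obtain ⟨za, hza, hda⟩ := hcl.exists_infDist_eq_dist hne a
  obtain ⟨zb, hzb, hdb⟩ := hcl.exists_infDist_eq_dist hne b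
  have hz : lam • za + (1 - lam) • zb ∈ C := hconv hza hzb h0 (by linarith) (by ring)
  calc infDist (lam • a + (1 - lam) • b) C
      ≤ dist (lam • a + (1 - lam) • b) (lam • za + (1 - lam) • zb) :=
        infDist_le_dist_of_mem hz
    _ ≤ lam * dist a za + (1 - lam) * dist b zb := by
        rw [dist_eq_norm, dist_eq_norm, dist_eq_norm]
        have heq : lam • a + (1 - lam) • b - (lam • za + (1 - lam) • zb)
            = lam • (a - za) + (1 - lam) • (b - zb) := by module
        rw [heq]
        calc ‖lam • (a - za) + (1 - lam) • (b - zb)‖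
            ≤ ‖lam • (a - za)‖ + ‖(1 - lam) • (b - zb)‖ := norm_add_le _ _
          _ = lam * ‖a - za‖ + (1 - lam) * ‖b - zb‖ := by
              rw [norm_smul, norm_smul, Real.norm_eq_abs, Real.norm_eq_abs,
                abs_of_nonneg h0, abs_of_nonneg (by linarith : (0:ℝ) ≤ 1 - lam)]
    _ = lam * infDist a C + (1 - lam) * infDist b C := by rw [hda, hdb]

/-- Existence of a supporting halfspace achieving the signed distance. -/
lemma stmt6_auxB (p : ℕ) (C : Set (EuclideanSpace ℝ (Fin p)))
    (hne : C.Nonempty) (hcl : IsClosed C) (hconv : Convex ℝ C) (hCne : C ≠ Set.univ)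
    (hint : (interior C).Nonempty) (m : EuclideanSpace ℝ (Fin p)) :
    ∃ (u : EuclideanSpace ℝ (Fin p)) (c : ℝ), ‖u‖ = 1 ∧ (∀ x ∈ C, ⟪x, u⟫ ≤ c) ∧
      c - ⟪m, u⟫ ≤ infDist m Cᶜ - infDist m C := by
  by_cases hm : m ∈ C
  · -- m ∈ C : separate the interior of C from the nearest point of closure Cᶜ
    have hccne : (closure Cᶜ).Nonempty := (nonempty_compl.2 hCne).closure
    obtain ⟨w, hw, hdw⟩ := isClosed_closure.exists_infDist_eq_dist hccne m
    have hr : infDist m Cᶜ = dist m w := by rw [← infDist_closure]; exact hdw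
    have hwni : w ∉ interior C := by
      intro hwi
      obtain ⟨z, hz1, hz2⟩ := mem_closure_iff.1 hw (interior C) isOpen_interior hwi
      exact hz2 (interior_subset hz1)
    obtain ⟨f, hf⟩ := geometric_hahn_banach_open_point hconv.interior isOpen_interior hwni
    set v := (InnerProductSpace.toDual ℝ (EuclideanSpace ℝ (Fin p))).symm f with hvdef
    have hv : ∀ x, ⟪v, x⟫ = f x := fun x => InnerProductSpace.toDual_symm_apply
    obtain ⟨x0, hx0⟩ := hint
    have hvne : v ≠ 0 := by
      intro h
      have h1 := hf x0 hx0
      rw [← hv, ← hv, h] at h1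
      simp at h1
    have hfle : ∀ x ∈ C, f x ≤ f w := by
      intro x hx
      by_contra hgt
      push_neg at hgt
      have key : ∀ t : ℝ, 0 < t → t ≤ 1 → (1 - t) * f x + t * f x0 < f w := by
        intro t ht0 ht1
        have hmem : (1 - t) • x + t • x0 ∈ interior C :=
          hconv.combo_closure_interior_mem_interior (subset_closure hx) hx0
            (by linarith) ht0 (by ring)
        have := hf _ hmem
        simpa [map_add, map_smul, smul_eq_mul] using this
      rcases le_or_gt (f x) (f x0) with hD | hD
      · have h1 := key 1 one_pos le_rfl
        simp at h1
        linarith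
      · set D := f x - f x0 with hDdef
        have hDpos : 0 < D := by simp [hDdef]; linarith
        set ε := f x - f w with hεdef
        have hεpos : 0 < ε := by simp [hεdef]; linarith
        have ht0 : 0 < min 1 (ε / (2 * D)) :=
          lt_min one_pos (div_pos hεpos (by linarith))
        have h1 := key _ ht0 (min_le_left _ _)
        have h2 : min 1 (ε / (2 * D)) * D ≤ ε / 2 := by
          have := min_le_right 1 (ε / (2 * D))
          calc min 1 (ε / (2 * D)) * D ≤ (ε / (2 * D)) * D :=
                mul_le_mul_of_nonneg_right this hDpos.le
            _ = ε / 2 := by field_simp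
        nlinarith
    refine ⟨‖v‖⁻¹ • v, ⟪w, ‖v‖⁻¹ • v⟫, ?_, ?_, ?_⟩
    · rw [norm_smul, Real.norm_eq_abs, abs_of_nonneg (inv_nonneg.2 (norm_nonneg v)),
        inv_mul_cancel₀ (norm_ne_zero_iff.2 hvne)]
    · intro x hx
      have h1 := hfle x hx
      rw [← hv, ← hv] at h1
      have h2 : ⟪x, ‖v‖⁻¹ • v⟫ = ‖v‖⁻¹ * ⟪v, x⟫ := by
        rw [real_inner_smul_right, real_inner_comm]
      have h3 : ⟪w, ‖v‖⁻¹ • v⟫ = ‖v‖⁻¹ * ⟪v, w⟫ := by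
        rw [real_inner_smul_right, real_inner_comm]
      rw [h2, h3]
      exact mul_le_mul_of_nonneg_left h1 (inv_nonneg.2 (norm_nonneg v))
    · have hnu : ‖‖v‖⁻¹ • v‖ = 1 := by
        rw [norm_smul, Real.norm_eq_abs, abs_of_nonneg (inv_nonneg.2 (norm_nonneg v)),
          inv_mul_cancel₀ (norm_ne_zero_iff.2 hvne)]
      have h1 : ⟪w, ‖v‖⁻¹ • v⟫ - ⟪m, ‖v‖⁻¹ • v⟫ = ⟪w - m, ‖v‖⁻¹ • v⟫ := by
        rw [inner_sub_left]
      have h2 : ⟪w - m, ‖v‖⁻¹ • v⟫ ≤ ‖w - m‖ := by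
        calc ⟪w - m, ‖v‖⁻¹ • v⟫ ≤ ‖w - m‖ * ‖‖v‖⁻¹ • v‖ := real_inner_le_norm _ _
          _ = ‖w - m‖ := by rw [hnu, mul_one]
      have h3 : ‖w - m‖ = dist m w := by rw [dist_eq_norm, norm_sub_rev]
      have h4 : infDist m C = 0 := infDist_zero_of_mem hm
      rw [h4, hr]
      linarith
  · -- m ∉ C : project m on C
    obtain ⟨z, hz, hdz⟩ := hcl.exists_infDist_eq_dist hne m
    have hmz : m ≠ z := fun h => hm (h ▸ hz)
    have hdpos : 0 < dist m z := dist_pos.2 hmz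
    have hnorm : ‖m - z‖ = dist m z := (dist_eq_norm m z).symm
    have hobt : ∀ x ∈ C, ⟪m - z, x - z⟫ ≤ 0 := by
      rw [← norm_eq_iInf_iff_real_inner_le_zero hconv hz]
      rw [hnorm, ← hdz, infDist_eq_iInf]
      simp only [dist_eq_norm]
    set d := dist m z with hddef
    refine ⟨d⁻¹ • (m - z), ⟪z, d⁻¹ • (m - z)⟫, ?_, ?_, ?_⟩
    · rw [norm_smul, Real.norm_eq_abs, abs_of_pos (inv_pos.2 hdpos), hnorm,
        inv_mul_cancel₀ hdpos.ne']
    · intro x hx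
      have h1 : ⟪x, d⁻¹ • (m - z)⟫ - ⟪z, d⁻¹ • (m - z)⟫ = d⁻¹ * ⟪m - z, x - z⟫ := by
        rw [← inner_sub_left, real_inner_smul_right, real_inner_comm]
      have h2 : d⁻¹ * ⟪m - z, x - z⟫ ≤ 0 :=
        mul_nonpos_of_nonneg_of_nonpos (inv_pos.2 hdpos).le (hobt x hx)
      linarith
    · have h1 : ⟪m, d⁻¹ • (m - z)⟫ - ⟪z, d⁻¹ • (m - z)⟫ = d⁻¹ * ⟪m - z, m - z⟫ := by
        rw [← inner_sub_left, real_inner_smul_right, real_inner_comm]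
      have h2 : ⟪m - z, m - z⟫ = d ^ 2 := by
        rw [real_inner_self_eq_norm_sq, hnorm]
      have h3 : d⁻¹ * d ^ 2 = d := by field_simp
      have h4 : infDist m Cᶜ = 0 := infDist_zero_of_mem hm
      rw [h4, hdz]
      have h5 : ⟪z, d⁻¹ • (m - z)⟫ - ⟪m, d⁻¹ • (m - z)⟫ = -d := by
        rw [show ⟪z, d⁻¹ • (m - z)⟫ - ⟪m, d⁻¹ • (m - z)⟫
            = -(⟪m, d⁻¹ • (m - z)⟫ - ⟪z, d⁻¹ • (m - z)⟫) by ring, h1, h2, h3]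
      linarith

/-- For a nonempty closed convex set C ⊊ ℝ^p,
φ(y) := dist(y, ℝ^p ∖ C) − dist(y, C) is concave. -/
theorem stmt_6 (p : ℕ) (C : Set (EuclideanSpace ℝ (Fin p)))
    (hne : C.Nonempty) (hcl : IsClosed C) (hconv : Convex ℝ C)
    (hCne : C ≠ Set.univ)
    (φ : EuclideanSpace ℝ (Fin p) → ℝ)
    (hφ : ∀ y, φ y = Metric.infDist y Cᶜ - Metric.infDist y C) :
    ∀ (a b : EuclideanSpace ℝ (Fin p)) (lam : ℝ), 0 ≤ lam → lam ≤ 1 →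
      lam * φ a + (1 - lam) * φ b ≤ φ (lam • a + (1 - lam) • b) := by
  intro a b lam h0 h1
  rcases eq_empty_or_nonempty (interior C) with hint | hint
  · have hd : ∀ y : EuclideanSpace ℝ (Fin p), infDist y Cᶜ = 0 := by
      intro y
      have hdense : Dense Cᶜ := interior_eq_empty_iff_dense_compl.1 hint
      rw [← infDist_closure, hdense.closure_eq]
      exact infDist_zero_of_mem (mem_univ y)
    have hc := stmt6_auxConv hne hcl hconv a b lam h0 h1
    simp only [hφ, hd]
    linarith
  · obtain ⟨u, c, hu, hCu, hmb⟩ := stmt6_auxB p C hne hcl hconv hCne hint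
      (lam • a + (1 - lam) • b)
    have ha := stmt6_auxA hne u hu c hCu a
    have hb := stmt6_auxA hne u hu c hCu b
    have hmv : ⟪lam • a + (1 - lam) • b, u⟫ = lam * ⟪a, u⟫ + (1 - lam) * ⟪b, u⟫ := by
      rw [inner_add_left, real_inner_smul_left, real_inner_smul_left]
    rw [hmv] at hmb
    simp only [hφ] at *
    nlinarith [mul_le_mul_of_nonneg_left ha h0,
      mul_le_mul_of_nonneg_left hb (by linarith : (0:ℝ) ≤ 1 - lam)]
end

section
/- Suppose ε̄ > 0 is such that E^{ε̄} is pointed, and define ϑ : ℝ^p → ℝ by ϑ(x) := dist(x − x_k, ℝ^p ∖ E^{ε̄}) − dist(x − x_k, E^{ε̄}). Then ϑ is Lipschitz continuous (hence continuous), concave (hence quasi-concave), increasing with respect to the cone E^{ε̄} (x_2 − x_1 ∈ E^{ε̄} implies ϑ(x_1) ≤ ϑ(x_2)), increasing with respect to the componentwise order (x ≤ y componentwise implies ϑ(x) ≤ ϑ(y)), and satisfies ϑ(x_k) = 0 and ϑ(x_j) > ϑ(x_k) for all j = 1, …, t. -/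
open Metric Set Pointwise

section Aux

variable {V : Type*} [NormedAddCommGroup V] [NormedSpace ℝ V]

lemma my_le_infDist {α : Type*} [PseudoMetricSpace α] {s : Set α} {x : α} {b : ℝ}
    (hs : s.Nonempty) (h : ∀ y ∈ s, b ≤ dist x y) : b ≤ infDist x s := by
  by_contra hlt
  push_neg at hlt
  obtain ⟨y, hy, hd⟩ := (infDist_lt_iff hs).1 hlt
  exact absurd hd (not_lt.2 (h y hy))

/-- Convexity of the distance function to a convex set. -/
lemma infDist_combo_le {C : Set V} (hconv : Convex ℝ C) (hC : C.Nonempty) (a b : V) {lam : ℝ}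
    (h0 : 0 ≤ lam) (h1 : lam ≤ 1) :
    infDist (lam • a + (1 - lam) • b) C ≤ lam * infDist a C + (1 - lam) * infDist b C := by
  refine le_of_forall_pos_le_add fun ε hε => ?_
  obtain ⟨a', ha', hda⟩ := (infDist_lt_iff hC).1
    (show infDist a C < infDist a C + ε by linarith)
  obtain ⟨b', hb', hdb⟩ := (infDist_lt_iff hC).1
    (show infDist b C < infDist b C + ε by linarith)
  have hmem : lam • a' + (1 - lam) • b' ∈ C := hconv ha' hb' h0 (by linarith) (by ring)
  have hle : infDist (lam • a + (1 - lam) • b) C ≤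
      dist (lam • a + (1 - lam) • b) (lam • a' + (1 - lam) • b') :=
    infDist_le_dist_of_mem hmem
  have heq : (lam • a + (1 - lam) • b) - (lam • a' + (1 - lam) • b')
      = lam • (a - a') + (1 - lam) • (b - b') := by module
  have hnorm : dist (lam • a + (1 - lam) • b) (lam • a' + (1 - lam) • b')
      ≤ lam * dist a a' + (1 - lam) * dist b b' := by
    rw [dist_eq_norm, heq, dist_eq_norm, dist_eq_norm]
    calc ‖lam • (a - a') + (1 - lam) • (b - b')‖
        ≤ ‖lam • (a - a')‖ + ‖(1 - lam) • (b - b')‖ := norm_add_le _ _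
      _ = lam * ‖a - a'‖ + (1 - lam) * ‖b - b'‖ := by
          rw [norm_smul, norm_smul, Real.norm_eq_abs, Real.norm_eq_abs,
            abs_of_nonneg h0, abs_of_nonneg (by linarith : (0:ℝ) ≤ 1 - lam)]
  have h2 : lam * dist a a' ≤ lam * (infDist a C + ε) :=
    mul_le_mul_of_nonneg_left hda.le h0
  have h3 : (1 - lam) * dist b b' ≤ (1 - lam) * (infDist b C + ε) :=
    mul_le_mul_of_nonneg_left hdb.le (by linarith)
  nlinarith [hle, hnorm]

/-- Concavity of the distance to the complement, on the convex set itself. -/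
lemma infDist_compl_combo_ge {C : Set V} (hconv : Convex ℝ C) {a b : V} (ha : a ∈ C)
    (hb : b ∈ C) {lam : ℝ} (h0 : 0 ≤ lam) (h1 : lam ≤ 1) :
    lam * infDist a Cᶜ + (1 - lam) * infDist b Cᶜ ≤
      infDist (lam • a + (1 - lam) • b) Cᶜ := by
  rcases eq_empty_or_nonempty Cᶜ with hne | hne
  · simp [hne]
  set y := lam • a + (1 - lam) • b with hy
  set A := infDist a Cᶜ with hA
  set B := infDist b Cᶜ with hB
  by_contra hcon
  push_neg at hcon
  set s := lam * A + (1 - lam) * B with hs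
  have hspos : 0 < s := lt_of_le_of_lt infDist_nonneg hcon
  obtain ⟨w, hw, hdw⟩ := (infDist_lt_iff hne).1 hcon
  set v := w - y with hv
  have hvs : ‖v‖ < s := by
    have : ‖v‖ = dist y w := by rw [hv, dist_eq_norm, norm_sub_rev]
    rwa [this]
  have key : ∀ c : V, c ∈ C → c + (infDist c Cᶜ / s) • v ∈ C := by
    intro c hc
    rcases (infDist_nonneg : (0:ℝ) ≤ infDist c Cᶜ).eq_or_lt with h | h
    · simpa [← h] using hc
    · by_contra hnc
      have hmemc : c + (infDist c Cᶜ / s) • v ∈ Cᶜ := hnc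
      have hled : infDist c Cᶜ ≤ dist c (c + (infDist c Cᶜ / s) • v) :=
        infDist_le_dist_of_mem hmemc
      rw [dist_eq_norm, sub_add_cancel_left, norm_neg, norm_smul, Real.norm_eq_abs,
        abs_of_nonneg (by positivity)] at hled
      have hlt : infDist c Cᶜ / s * ‖v‖ < infDist c Cᶜ / s * s :=
        mul_lt_mul_of_pos_left hvs (by positivity)
      rw [div_mul_cancel₀ _ (ne_of_gt hspos)] at hlt
      linarith
  have ha' : a + (A / s) • v ∈ C := key a ha
  have hb' : b + (B / s) • v ∈ C := key b hb
  have hcomb : lam • (a + (A / s) • v) + (1 - lam) • (b + (B / s) • v) = w := by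
    have h1 : lam • (a + (A / s) • v) + (1 - lam) • (b + (B / s) • v)
        = y + ((lam * (A / s) + (1 - lam) * (B / s))) • v := by
      rw [hy]; module
    have h2 : lam * (A / s) + (1 - lam) * (B / s) = 1 := by
      field_simp [hs]
      exact hs.symm
    rw [h1, h2, one_smul, hv]
    abel
  have : w ∈ C := hcomb ▸ hconv ha' hb' h0 (by linarith) (by ring)
  exact hw this

/-- Mixed case of concavity of the signed distance. -/
lemma mixed_case {C : Set V} (hconv : Convex ℝ C) {a b : V} (ha : a ∈ C) (hb : b ∉ C)
    {lam : ℝ} (h0 : 0 ≤ lam) (h1 : lam ≤ 1) :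
    lam * infDist a Cᶜ - (1 - lam) * infDist b C ≤
      infDist (lam • a + (1 - lam) • b) Cᶜ - infDist (lam • a + (1 - lam) • b) C := by
  set y := lam • a + (1 - lam) • b with hy
  set A := infDist a Cᶜ with hA
  set B := infDist b C with hB
  by_cases hyC : y ∈ C
  · rw [infDist_zero_of_mem hyC, sub_zero]
    refine le_of_forall_pos_le_add fun ε hε => ?_
    obtain ⟨b', hb', hdb⟩ := (infDist_lt_iff ⟨a, ha⟩).1
      (show infDist b C < B + ε by rw [← hB]; linarith)
    have hL2 : lam * A + (1 - lam) * infDist b' Cᶜ ≤ infDist (lam • a + (1 - lam) • b') Cᶜ :=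
      infDist_compl_combo_ge hconv ha hb' h0 h1
    have h1lam : (0:ℝ) ≤ 1 - lam := by linarith
    have htri : infDist (lam • a + (1 - lam) • b') Cᶜ ≤
        infDist y Cᶜ + dist (lam • a + (1 - lam) • b') y :=
      infDist_le_infDist_add_dist
    have hdist : dist (lam • a + (1 - lam) • b') y = (1 - lam) * dist b' b := by
      rw [hy, dist_eq_norm, dist_eq_norm]
      have : (lam • a + (1 - lam) • b') - (lam • a + (1 - lam) • b)
          = (1 - lam) • (b' - b) := by module
      rw [this, norm_smul, Real.norm_eq_abs, abs_of_nonneg h1lam]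
    have hb'b : dist b' b < B + ε := by rwa [dist_comm]
    have hnn : 0 ≤ (1 - lam) * infDist b' Cᶜ := mul_nonneg h1lam infDist_nonneg
    nlinarith [mul_le_mul_of_nonneg_left hb'b.le h1lam]
  · have hyCc : y ∈ Cᶜ := hyC
    rw [infDist_zero_of_mem hyCc, zero_sub]
    have hlam1 : lam < 1 := by
      rcases lt_or_eq_of_le h1 with h | h
      · exact h
      · exfalso; apply hyC; rw [hy, h]; simpa using ha
    have h1lam : (0:ℝ) < 1 - lam := by linarith
    -- key claim
    have claim : ∀ c ∈ C, lam * A + infDist y C ≤ (1 - lam) * dist b c := by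
      intro c hc
      set v := y - (lam • a + (1 - lam) • c) with hv
      have hveq : (1 - lam) * dist b c = ‖v‖ := by
        rw [dist_eq_norm]
        have : v = (1 - lam) • (b - c) := by rw [hv, hy]; module
        rw [this, norm_smul, Real.norm_eq_abs, abs_of_nonneg h1lam.le]
      rw [hveq]
      have hvne : v ≠ 0 := by
        intro h
        apply hyC
        have : y = lam • a + (1 - lam) • c := by
          have := sub_eq_zero.1 (hv ▸ h)
          exact this
        rw [this]
        exact hconv ha hc h0 h1lam.le (by ring)
      set u := ‖v‖⁻¹ • v with hu
      have hnu : ‖u‖ = 1 := norm_smul_inv_norm hvne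
      have hvu : ‖v‖ • u = v := by
        rw [hu, smul_smul, mul_inv_cancel₀ (norm_ne_zero_iff.2 hvne), one_smul]
      refine le_of_forall_pos_le_add fun ε hε => ?_
      set r := max 0 (A - ε) with hr
      have hrnn : 0 ≤ r := le_max_left _ _
      have hrA : A - ε ≤ r := le_max_right _ _
      have har : a + r • u ∈ C := by
        rcases max_choice 0 (A - ε) with h | h
        · rw [hr, h]; simpa using ha
        · have hrlt : r < A := by rw [hr, h]; linarith
          have : dist a (a + r • u) < A := by
            rw [dist_eq_norm, sub_add_cancel_left, norm_neg, norm_smul, Real.norm_eq_abs,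
              abs_of_nonneg hrnn, hnu, mul_one]
            exact hrlt
          have h2 := notMem_of_dist_lt_infDist (x := a) (y := a + r • u) (s := Cᶜ) this
          simpa using h2
      by_cases hcase : ‖v‖ < lam * r
      · exfalso
        have hlampos : 0 < lam := by
          by_contra h
          push_neg at h
          have : lam = 0 := le_antisymm h h0
          rw [this, zero_mul] at hcase
          exact absurd hcase (not_lt.2 (norm_nonneg v))
        have hrpos : 0 < r := by
          by_contra h
          push_neg at h
          have h2 : lam * r ≤ lam * 0 := mul_le_mul_of_nonneg_left h h0
          rw [mul_zero] at h2
          linarith [norm_nonneg v]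
        -- a'' := a + (lam⁻¹ * ‖v‖) • u ∈ C
        have hultA : lam⁻¹ * ‖v‖ < A := by
          have h1 : lam⁻¹ * ‖v‖ < lam⁻¹ * (lam * r) :=
            mul_lt_mul_of_pos_left hcase (by positivity)
          rw [← mul_assoc, inv_mul_cancel₀ (ne_of_gt hlampos), one_mul] at h1
          have : r < A := by
            rcases max_choice 0 (A - ε) with h | h
            · exfalso; rw [hr] at hrpos; rw [h] at hrpos; exact lt_irrefl _ hrpos
            · rw [hr, h]; linarith
          linarith
        have ha'' : a + (lam⁻¹ * ‖v‖) • u ∈ C := by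
          have hd : dist a (a + (lam⁻¹ * ‖v‖) • u) < A := by
            rw [dist_eq_norm, sub_add_cancel_left, norm_neg, norm_smul, Real.norm_eq_abs,
              abs_of_nonneg (by positivity), hnu, mul_one]
            exact hultA
          have h2 := notMem_of_dist_lt_infDist (x := a) (y := a + (lam⁻¹ * ‖v‖) • u) (s := Cᶜ) hd
          simpa using h2
        apply hyC
        have : lam • (a + (lam⁻¹ * ‖v‖) • u) + (1 - lam) • c = y := by
          have hexp : lam • (a + (lam⁻¹ * ‖v‖) • u) + (1 - lam) • c
              = (lam • a + (1 - lam) • c) + (lam * (lam⁻¹ * ‖v‖)) • u := by module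
          rw [hexp, ← mul_assoc, mul_inv_cancel₀ (ne_of_gt hlampos), one_mul, hvu, hv]
          abel
        rw [← this]
        exact hconv ha'' hc h0 h1lam.le (by ring)
      · push_neg at hcase
        have hz : lam • (a + r • u) + (1 - lam) • c ∈ C :=
          hconv har hc h0 h1lam.le (by ring)
        have hdy : infDist y C ≤ ‖v‖ - lam * r := by
          have hle : infDist y C ≤ dist y (lam • (a + r • u) + (1 - lam) • c) :=
            infDist_le_dist_of_mem hz
          have heq : y - (lam • (a + r • u) + (1 - lam) • c) = v - (lam * r) • u := by
            rw [hv]; module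
          have hnorm : dist y (lam • (a + r • u) + (1 - lam) • c) = ‖v‖ - lam * r := by
            rw [dist_eq_norm, heq]
            have h2 : v - (lam * r) • u = (‖v‖ - lam * r) • u := by
              rw [sub_smul, hvu]
            rw [h2, norm_smul, Real.norm_eq_abs, abs_of_nonneg (by linarith), hnu, mul_one]
          rw [hnorm] at hle
          exact hle
        have : lam * (A - ε) ≤ lam * r := mul_le_mul_of_nonneg_left hrA h0
        nlinarith
    -- conclude from claim
    have hBc : lam * A + infDist y C ≤ (1 - lam) * B := by
      have hq : (lam * A + infDist y C) / (1 - lam) ≤ B := by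
        rw [hB]
        refine my_le_infDist ⟨a, ha⟩ fun c hc => ?_
        rw [div_le_iff₀ h1lam]
        calc lam * A + infDist y C ≤ (1 - lam) * dist b c := claim c hc
          _ = dist b c * (1 - lam) := by ring
      calc lam * A + infDist y C = ((lam * A + infDist y C) / (1 - lam)) * (1 - lam) := by
            field_simp
        _ ≤ B * (1 - lam) := mul_le_mul_of_nonneg_right hq h1lam.le
        _ = (1 - lam) * B := by ring
    linarith

/-- Concavity of the signed distance to a convex set. -/
lemma signed_dist_concave {C : Set V} (hconv : Convex ℝ C) (hne : C.Nonempty) (a b : V)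
    {lam : ℝ} (h0 : 0 ≤ lam) (h1 : lam ≤ 1) :
    lam * (infDist a Cᶜ - infDist a C) + (1 - lam) * (infDist b Cᶜ - infDist b C) ≤
      infDist (lam • a + (1 - lam) • b) Cᶜ - infDist (lam • a + (1 - lam) • b) C := by
  by_cases ha : a ∈ C <;> by_cases hb : b ∈ C
  · have hy : lam • a + (1 - lam) • b ∈ C := hconv ha hb h0 (by linarith) (by ring)
    rw [infDist_zero_of_mem ha, infDist_zero_of_mem hb, infDist_zero_of_mem hy]
    have := infDist_compl_combo_ge hconv ha hb h0 h1
    linarith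
  · have h2 : infDist b Cᶜ = 0 := infDist_zero_of_mem hb
    rw [infDist_zero_of_mem ha, h2]
    have := mixed_case hconv ha hb h0 h1
    linarith
  · have h2 : infDist a Cᶜ = 0 := infDist_zero_of_mem ha
    rw [infDist_zero_of_mem hb, h2]
    have hmix := mixed_case hconv hb ha (by linarith : (0:ℝ) ≤ 1 - lam)
      (by linarith : (1:ℝ) - lam ≤ 1)
    have hcomm : (1 - lam) • b + (1 - (1 - lam)) • a = lam • a + (1 - lam) • b := by module
    rw [hcomm] at hmix
    have h3 : (1 : ℝ) - (1 - lam) = lam := by ring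
    rw [h3] at hmix
    linarith
  · have h2 : infDist a Cᶜ = 0 := infDist_zero_of_mem ha
    have h3 : infDist b Cᶜ = 0 := infDist_zero_of_mem hb
    rw [h2, h3]
    have hL1 := infDist_combo_le hconv hne a b h0 h1
    have hnn : (0:ℝ) ≤ infDist (lam • a + (1 - lam) • b) Cᶜ := infDist_nonneg
    linarith

end Aux

lemma euclid_abs_le_norm {p : ℕ} (z : EuclideanSpace ℝ (Fin p)) (i : Fin p) : |z i| ≤ ‖z‖ := by
  rw [EuclideanSpace.norm_eq]
  have h1 : |z i| = Real.sqrt (‖z i‖ ^ 2) := by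
    rw [Real.norm_eq_abs, Real.sqrt_sq_eq_abs, abs_abs]
  rw [h1]
  apply Real.sqrt_le_sqrt
  exact Finset.single_le_sum (fun j _ => sq_nonneg ‖z j‖) (Finset.mem_univ i)

/-- If E^{ε̄} is pointed for some ε̄ > 0, then ϑ defined by
ϑ(x) := dist(x − x_k, ℝ^p ∖ E^{ε̄}) − dist(x − x_k, E^{ε̄}) is Lipschitz (hence
continuous), concave (hence quasi-concave), increasing w.r.t. E^{ε̄}, increasing
w.r.t. the componentwise order, and satisfies ϑ(x_k) = 0 and ϑ(x_j) > ϑ(x_k). -/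
theorem stmt_14 (p t : ℕ) (hp : 1 ≤ p) (ht : 1 ≤ t)
    (x : Fin t → EuclideanSpace ℝ (Fin p)) (xk : EuclideanSpace ℝ (Fin p))
    (e : EuclideanSpace ℝ (Fin p)) (he : ∀ i, e i = 1)
    (Eeps : ℝ → Set (EuclideanSpace ℝ (Fin p)))
    (hEeps : ∀ ε : ℝ, Eeps ε = {z | ∃ (lam : Fin t → ℝ) (r : EuclideanSpace ℝ (Fin p)),
        (∀ j, 0 ≤ lam j) ∧ (∀ i, 0 ≤ r i) ∧
        z = (∑ j, lam j • (x j - ε • e - xk)) + r})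
    (εbar : ℝ) (hεbar : 0 < εbar)
    (hpointed : Eeps εbar ∩ (-(Eeps εbar)) = {0})
    (ϑ : EuclideanSpace ℝ (Fin p) → ℝ)
    (hϑ : ∀ z, ϑ z = Metric.infDist (z - xk) (Eeps εbar)ᶜ
                      - Metric.infDist (z - xk) (Eeps εbar)) :
    (∃ K : NNReal, LipschitzWith K ϑ) ∧
    Continuous ϑ ∧
    (∀ (a b : EuclideanSpace ℝ (Fin p)) (lam : ℝ), 0 ≤ lam → lam ≤ 1 →
      lam * ϑ a + (1 - lam) * ϑ b ≤ ϑ (lam • a + (1 - lam) • b)) ∧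
    (∀ (a b : EuclideanSpace ℝ (Fin p)) (lam : ℝ), 0 ≤ lam → lam ≤ 1 →
      min (ϑ a) (ϑ b) ≤ ϑ (lam • a + (1 - lam) • b)) ∧
    (∀ a b : EuclideanSpace ℝ (Fin p), b - a ∈ Eeps εbar → ϑ a ≤ ϑ b) ∧
    (∀ a b : EuclideanSpace ℝ (Fin p), (∀ i, a i ≤ b i) → ϑ a ≤ ϑ b) ∧
    ϑ xk = 0 ∧
    (∀ j : Fin t, ϑ xk < ϑ (x j)) := by
  set C := Eeps εbar with hC
  have hCdef : C = {z | ∃ (lam : Fin t → ℝ) (r : EuclideanSpace ℝ (Fin p)),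
      (∀ j, 0 ≤ lam j) ∧ (∀ i, 0 ≤ r i) ∧
      z = (∑ j, lam j • (x j - εbar • e - xk)) + r} := hEeps εbar
  -- membership introduction
  have memC : ∀ (lam : Fin t → ℝ) (r : EuclideanSpace ℝ (Fin p)),
      (∀ j, 0 ≤ lam j) → (∀ i, 0 ≤ r i) →
      (∑ j, lam j • (x j - εbar • e - xk)) + r ∈ C := by
    intro lam r hl hr
    rw [hCdef]
    exact ⟨lam, r, hl, hr, rfl⟩
  have h0C : (0 : EuclideanSpace ℝ (Fin p)) ∈ C := by
    have := memC (fun _ => 0) 0 (fun _ => le_refl 0) (fun i => by simp)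
    simpa using this
  have hneC : C.Nonempty := ⟨0, h0C⟩
  -- closed under addition
  have haddC : ∀ z1 ∈ C, ∀ z2 ∈ C, z1 + z2 ∈ C := by
    intro z1 hz1 z2 hz2
    rw [hCdef] at hz1 hz2
    obtain ⟨l1, r1, hl1, hr1, he1⟩ := hz1
    obtain ⟨l2, r2, hl2, hr2, he2⟩ := hz2
    have := memC (l1 + l2) (r1 + r2) (fun j => add_nonneg (hl1 j) (hl2 j))
      (fun i => by rw [PiLp.add_apply]; exact add_nonneg (hr1 i) (hr2 i))
    have hsum : (∑ j, (l1 + l2) j • (x j - εbar • e - xk)) + (r1 + r2) = z1 + z2 := by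
      rw [he1, he2]
      have : ∑ j, (l1 + l2) j • (x j - εbar • e - xk)
          = (∑ j, l1 j • (x j - εbar • e - xk)) + ∑ j, l2 j • (x j - εbar • e - xk) := by
        rw [← Finset.sum_add_distrib]
        congr 1
        funext j
        rw [Pi.add_apply, add_smul]
      rw [this]
      abel
    rwa [hsum] at this
  -- closed under nonneg scaling
  have hsmulC : ∀ (c : ℝ), 0 ≤ c → ∀ z ∈ C, c • z ∈ C := by
    intro c hc z hz
    rw [hCdef] at hz
    obtain ⟨l, r, hl, hr, hez⟩ := hz
    have := memC (c • l) (c • r) (fun j => mul_nonneg hc (hl j))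
      (fun i => by rw [PiLp.smul_apply]; exact mul_nonneg hc (hr i))
    have hsum : (∑ j, (c • l) j • (x j - εbar • e - xk)) + c • r = c • z := by
      rw [hez, smul_add, Finset.smul_sum]
      congr 1
      refine Finset.sum_congr rfl fun j _ => ?_
      rw [Pi.smul_apply, smul_eq_mul, mul_smul]
    rwa [hsum] at this
  have hconvC : Convex ℝ C := by
    intro z1 hz1 z2 hz2 μ ν hμ hν hμν
    exact haddC _ (hsmulC μ hμ z1 hz1) _ (hsmulC ν hν z2 hz2)
  -- nonneg orthant inside C
  have horthC : ∀ z : EuclideanSpace ℝ (Fin p), (∀ i, 0 ≤ z i) → z ∈ C := by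
    intro z hz
    have := memC (fun _ => 0) z (fun _ => le_refl 0) hz
    simpa using this
  -- ball of radius εbar around x j - xk is in C
  have hballC : ∀ (j : Fin t) (w : EuclideanSpace ℝ (Fin p)),
      dist w (x j - xk) < εbar → w ∈ C := by
    intro j w hw
    have hmem := memC (fun j' => if j' = j then 1 else 0) (εbar • e + (w - (x j - xk)))
      (fun j' => by by_cases h : j' = j <;> simp [h])
      (fun i => by
        rw [PiLp.add_apply, PiLp.smul_apply, he i, smul_eq_mul, mul_one]
        have h1 : |(w - (x j - xk)) i| ≤ ‖w - (x j - xk)‖ := euclid_abs_le_norm _ i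
        have h2 : ‖w - (x j - xk)‖ < εbar := by rwa [← dist_eq_norm]
        have := abs_le.1 h1
        linarith [this.1])
    have hmem' : (∑ j', (if j' = j then (1:ℝ) else 0) • (x j' - εbar • e - xk))
        + (εbar • e + (w - (x j - xk))) ∈ C := hmem
    have hs : ∑ j', (if j' = j then (1:ℝ) else 0) • (x j' - εbar • e - xk)
        = x j - εbar • e - xk := by
      rw [Finset.sum_eq_single j]
      · simp
      · intro b _ hbj; simp [hbj]
      · intro h; exact absurd (Finset.mem_univ j) h
    rw [hs] at hmem'
    have hsum : x j - εbar • e - xk + (εbar • e + (w - (x j - xk))) = w := by abel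
    rwa [hsum] at hmem'
  have hxjC : ∀ j : Fin t, x j - xk ∈ C := fun j =>
    hballC j _ (by rw [dist_self]; exact hεbar)
  -- -δ e is not in C
  have hnotC : ∀ δ : ℝ, 0 < δ → -(δ • e) ∉ C := by
    intro δ hδ hmem
    have hmem2 : δ • e ∈ C := horthC _ (fun i => by
      rw [PiLp.smul_apply, he i, smul_eq_mul, mul_one]; exact hδ.le)
    have hmem3 : δ • e ∈ C ∩ (-C) := ⟨hmem2, by rwa [Set.mem_neg]⟩
    rw [hC] at hmem3
    rw [hpointed] at hmem3
    have := Set.mem_singleton_iff.1 hmem3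
    have hzero : (δ • e) ⟨0, hp⟩ = 0 := by rw [this]; rfl
    rw [PiLp.smul_apply, he ⟨0, hp⟩, smul_eq_mul, mul_one] at hzero
    exact (ne_of_gt hδ) hzero
  have hcne : Cᶜ.Nonempty := ⟨-(εbar • e), hnotC εbar hεbar⟩
  have hepos : 0 < ‖e‖ := by
    rw [norm_pos_iff]
    intro h
    have h1 := he ⟨0, hp⟩
    rw [h] at h1
    simp at h1
  -- infDist of 0 to the complement is 0
  have hzero_cpl : infDist (0 : EuclideanSpace ℝ (Fin p)) Cᶜ = 0 := by
    refine le_antisymm ?_ infDist_nonneg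
    refine le_of_forall_pos_le_add fun ε hε => ?_
    have hδ : 0 < ε / (2 * ‖e‖) := by positivity
    have hle : infDist (0 : EuclideanSpace ℝ (Fin p)) Cᶜ
        ≤ dist (0 : EuclideanSpace ℝ (Fin p)) (-((ε / (2 * ‖e‖)) • e)) :=
      infDist_le_dist_of_mem (hnotC _ hδ)
    have hd : dist (0 : EuclideanSpace ℝ (Fin p)) (-((ε / (2 * ‖e‖)) • e))
        = (ε / (2 * ‖e‖)) * ‖e‖ := by
      rw [dist_eq_norm, zero_sub, neg_neg, norm_smul, Real.norm_eq_abs, abs_of_pos hδ]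
    rw [hd] at hle
    have : ε / (2 * ‖e‖) * ‖e‖ = ε / 2 := by field_simp
    rw [this] at hle
    linarith
  -- ϑ xk = 0
  have hthk : ϑ xk = 0 := by
    rw [hϑ, sub_self, infDist_zero_of_mem h0C, hzero_cpl, sub_zero]
  -- ϑ (x j) ≥ εbar
  have hthj : ∀ j : Fin t, εbar ≤ ϑ (x j) := by
    intro j
    rw [hϑ]
    have h1 : infDist (x j - xk) C = 0 := infDist_zero_of_mem (hxjC j)
    have h2 : εbar ≤ infDist (x j - xk) Cᶜ := by
      refine my_le_infDist hcne fun u hu => ?_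
      by_contra hlt
      push_neg at hlt
      exact hu (hballC j u (by rwa [dist_comm]))
    linarith
  -- monotonicity wrt cone
  have hmono : ∀ a b : EuclideanSpace ℝ (Fin p), b - a ∈ C → ϑ a ≤ ϑ b := by
    intro a b hba
    rw [hϑ a, hϑ b]
    have h1 : infDist (b - xk) C ≤ infDist (a - xk) C := by
      refine le_of_forall_pos_le_add fun ε hε => ?_
      obtain ⟨w, hw, hdw⟩ := (infDist_lt_iff hneC).1
        (show infDist (a - xk) C < infDist (a - xk) C + ε by linarith)
      have hwm : w + (b - a) ∈ C := haddC w hw _ hba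
      have hle : infDist (b - xk) C ≤ dist (b - xk) (w + (b - a)) :=
        infDist_le_dist_of_mem hwm
      have heq : dist (b - xk) (w + (b - a)) = dist (a - xk) w := by
        rw [dist_eq_norm, dist_eq_norm]
        congr 1
        abel
      rw [heq] at hle
      linarith
    have h2 : infDist (a - xk) Cᶜ ≤ infDist (b - xk) Cᶜ := by
      refine le_of_forall_pos_le_add fun ε hε => ?_
      obtain ⟨u, hu, hdu⟩ := (infDist_lt_iff hcne).1
        (show infDist (b - xk) Cᶜ < infDist (b - xk) Cᶜ + ε by linarith)
      have hum : u - (b - a) ∈ Cᶜ := by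
        intro hmem
        apply hu
        have : (u - (b - a)) + (b - a) ∈ C := haddC _ hmem _ hba
        rwa [sub_add_cancel] at this
      have hle : infDist (a - xk) Cᶜ ≤ dist (a - xk) (u - (b - a)) :=
        infDist_le_dist_of_mem hum
      have heq : dist (a - xk) (u - (b - a)) = dist (b - xk) u := by
        rw [dist_eq_norm, dist_eq_norm]
        congr 1
        abel
      rw [heq] at hle
      linarith
    linarith
  -- concavity
  have hconcave : ∀ (a b : EuclideanSpace ℝ (Fin p)) (lam : ℝ), 0 ≤ lam → lam ≤ 1 →
      lam * ϑ a + (1 - lam) * ϑ b ≤ ϑ (lam • a + (1 - lam) • b) := by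
    intro a b lam h0 h1
    rw [hϑ a, hϑ b, hϑ (lam • a + (1 - lam) • b)]
    have heq : lam • a + (1 - lam) • b - xk = lam • (a - xk) + (1 - lam) • (b - xk) := by
      module
    rw [heq]
    exact signed_dist_concave hconvC hneC (a - xk) (b - xk) h0 h1
  -- Lipschitz
  have hlip : LipschitzWith 2 ϑ := by
    have key : ∀ z w : EuclideanSpace ℝ (Fin p), ϑ z - ϑ w ≤ 2 * dist z w := by
      intro z w
      rw [hϑ z, hϑ w]
      have hd : dist (z - xk) (w - xk) = dist z w := by
        rw [dist_eq_norm, dist_eq_norm]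
        congr 1
        abel
      have h1 : infDist (z - xk) Cᶜ ≤ infDist (w - xk) Cᶜ + dist (z - xk) (w - xk) :=
        infDist_le_infDist_add_dist
      have h2 : infDist (w - xk) C ≤ infDist (z - xk) C + dist (w - xk) (z - xk) :=
        infDist_le_infDist_add_dist
      rw [hd] at h1
      rw [dist_comm, hd] at h2
      linarith
    refine LipschitzWith.of_dist_le_mul fun z w => ?_
    rw [Real.dist_eq, NNReal.coe_ofNat]
    rw [abs_sub_le_iff]
    exact ⟨key z w, by rw [dist_comm]; exact key w z⟩
  refine ⟨⟨2, hlip⟩, hlip.continuous, hconcave, ?_, hmono, ?_, hthk, ?_⟩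
  · intro a b lam h0 h1
    have := hconcave a b lam h0 h1
    have hmin : min (ϑ a) (ϑ b) ≤ lam * ϑ a + (1 - lam) * ϑ b := by
      have ha := min_le_left (ϑ a) (ϑ b)
      have hb := min_le_right (ϑ a) (ϑ b)
      nlinarith [mul_le_mul_of_nonneg_left ha h0,
        mul_le_mul_of_nonneg_left hb (by linarith : (0:ℝ) ≤ 1 - lam)]
    linarith
  · intro a b hab
    apply hmono
    apply horthC
    intro i
    rw [PiLp.sub_apply]
    linarith [hab i]
  · intro j
    rw [hthk]
    exact lt_of_lt_of_le hεbar (hthj j)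
end

section
/- If there exists a function f : ℝ^p → ℝ that is increasing (x ≤ y componentwise implies f(x) ≤ f(y)) and quasi-concave (f(λx + (1−λ)y) ≥ min{f(x), f(y)} for all x, y ∈ ℝ^p and λ ∈ [0,1]) satisfying f(x_j) > f(x_k) for all j = 1, …, t, then the cone E is pointed. -/
open Metric Set Pointwise

/-- If there exists an increasing quasi-concave f : ℝ^p → ℝ with
f(x_j) > f(x_k) for all j, then the cone E is pointed. -/
theorem stmt_15 (p t : ℕ) (hp : 1 ≤ p) (ht : 1 ≤ t)
    (x : Fin t → EuclideanSpace ℝ (Fin p)) (xk : EuclideanSpace ℝ (Fin p))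
    (E : Set (EuclideanSpace ℝ (Fin p)))
    (hE : E = {z | ∃ (lam : Fin t → ℝ) (r : EuclideanSpace ℝ (Fin p)),
        (∀ j, 0 ≤ lam j) ∧ (∀ i, 0 ≤ r i) ∧ z = (∑ j, lam j • (x j - xk)) + r})
    (f : EuclideanSpace ℝ (Fin p) → ℝ)
    (hmono : ∀ a b : EuclideanSpace ℝ (Fin p), (∀ i, a i ≤ b i) → f a ≤ f b)
    (hqc : ∀ (a b : EuclideanSpace ℝ (Fin p)) (lam : ℝ), 0 ≤ lam → lam ≤ 1 →
      min (f a) (f b) ≤ f (lam • a + (1 - lam) • b))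
    (hpref : ∀ j : Fin t, f xk < f (x j)) :
    E ∩ (-E) = {0} := by
  subst hE
  ext z
  simp only [Set.mem_inter_iff, Set.mem_neg, Set.mem_setOf_eq, Set.mem_singleton_iff]
  constructor
  · rintro ⟨⟨lam, r, hlam, hr, hz⟩, ⟨mu, s, hmu, hs, hz'⟩⟩
    set ν : Fin t → ℝ := fun j => lam j + mu j with hν
    have hνnn : ∀ j, 0 ≤ ν j := fun j => add_nonneg (hlam j) (hmu j)
    have hv : (∑ j, ν j • (x j - xk)) = -(r + s) := by
      have h0 : (∑ j, lam j • (x j - xk)) + r + ((∑ j, mu j • (x j - xk)) + s) = 0 := by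
        rw [← hz, ← hz']; abel
      have : (∑ j, ν j • (x j - xk)) = (∑ j, lam j • (x j - xk)) + (∑ j, mu j • (x j - xk)) := by
        rw [← Finset.sum_add_distrib]
        exact Finset.sum_congr rfl fun j _ => by rw [hν, add_smul]
      rw [this]
      have := h0
      linear_combination (norm := module) h0
    have hS : (∑ j, ν j) = 0 := by
      by_contra hS0
      have hSpos : 0 < ∑ j, ν j := lt_of_le_of_ne (Finset.sum_nonneg fun j _ => hνnn j) (Ne.symm hS0)
      set S := ∑ j, ν j
      set u : EuclideanSpace ℝ (Fin p) := ∑ j, (ν j / S) • x j with hu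
      -- u = xk + S⁻¹ • (∑ ν j • (x j - xk))
      have hsum1 : (∑ j, ν j / S) = 1 := by
        rw [← Finset.sum_div, div_self hS0]
      have huv : u = xk + S⁻¹ • (∑ j, ν j • (x j - xk)) := by
        rw [hu, Finset.smul_sum]
        have : ∀ j ∈ Finset.univ, (ν j / S) • x j
            = (ν j / S) • xk + S⁻¹ • (ν j • (x j - xk)) := by
          intro j _
          rw [smul_smul, div_eq_inv_mul]
          module
        rw [Finset.sum_congr rfl this, Finset.sum_add_distrib, ← Finset.sum_smul, hsum1, one_smul]
      have hule : ∀ i, u i ≤ xk i := by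
        intro i
        have h1 := congrArg (fun w : EuclideanSpace ℝ (Fin p) => w i) huv
        simp only [PiLp.add_apply, PiLp.smul_apply, smul_eq_mul] at h1
        have h2 := congrArg (fun w : EuclideanSpace ℝ (Fin p) => w i) hv
        simp only [PiLp.neg_apply, PiLp.add_apply] at h2
        rw [h2] at h1
        have : S⁻¹ * -(r i + s i) ≤ 0 := by
          apply mul_nonpos_of_nonneg_of_nonpos (by positivity)
          linarith [hr i, hs i]
        rw [h1]; linarith
      -- convexity of superlevel set
      haveI : Nonempty (Fin t) := ⟨⟨0, ht⟩⟩
      obtain ⟨j0, _, hj0⟩ := Finset.exists_mem_eq_inf' (Finset.univ_nonempty (α := Fin t))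
        (fun j => f (x j))
      set c := Finset.univ.inf' Finset.univ_nonempty (fun j => f (x j)) with hc
      have hconv : Convex ℝ {y : EuclideanSpace ℝ (Fin p) | c ≤ f y} := by
        intro a ha b hb α β hα hβ hab
        have hβ' : β = 1 - α := by linarith
        subst hβ'
        exact le_trans (le_min ha hb) (hqc a b α hα (by linarith))
      have humem : u ∈ {y : EuclideanSpace ℝ (Fin p) | c ≤ f y} := by
        rw [hu]
        exact hconv.sum_mem (fun j _ => div_nonneg (hνnn j) hSpos.le) hsum1
          (fun j _ => show c ≤ f (x j) from Finset.inf'_le _ (Finset.mem_univ j))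
      have h3 : f u ≤ f xk := hmono u xk hule
      have h4 : f xk < c := hj0 ▸ hpref j0
      have h5 : c ≤ f u := humem
      linarith
    have hν0 : ∀ j, ν j = 0 := by
      intro j
      have := (Finset.sum_eq_zero_iff_of_nonneg (fun j _ => hνnn j)).1 hS j (Finset.mem_univ j)
      exact this
    have hlam0 : ∀ j, lam j = 0 := fun j => by
      have := hν0 j; have := hlam j; have := hmu j; simp [hν] at *; linarith
    have hzr : z = r := by
      rw [hz, Finset.sum_congr rfl (fun j _ => by rw [hlam0 j, zero_smul]),
        Finset.sum_const_zero, zero_add]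
    have hmu0 : ∀ j, mu j = 0 := fun j => by
      have h1 := hν0 j; have := hlam j; have := hmu j; simp only [hν] at h1; linarith
    have hzs : -z = s := by
      rw [hz', Finset.sum_congr rfl (fun j _ => by rw [hmu0 j, zero_smul]),
        Finset.sum_const_zero, zero_add]
    ext i
    have h1 : z i = r i := congrArg (fun w : EuclideanSpace ℝ (Fin p) => w i) hzr
    have h2 : -(z i) = s i := by
      have := congrArg (fun w : EuclideanSpace ℝ (Fin p) => w i) hzs
      simpa using this
    have : z i = 0 := le_antisymm (by linarith [hs i]) (h1 ▸ hr i)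
    simpa using this
  · rintro rfl
    refine ⟨⟨fun _ => 0, 0, fun _ => le_refl 0, fun i => le_refl 0, by simp⟩,
      ⟨fun _ => 0, 0, fun _ => le_refl 0, fun i => le_refl 0, by simp⟩⟩
end

section
/- The following are equivalent: (i) there exists a function f : ℝ^p → ℝ that is increasing (x ≤ y componentwise implies f(x) ≤ f(y)) and quasi-concave (f(λx + (1−λ)y) ≥ min{f(x), f(y)} for all x, y ∈ ℝ^p and λ ∈ [0,1]) with f(x_j) > f(x_k) for all j = 1, …, t; (ii) there exists a vector d ∈ ℝ^p with d > 0 componentwise such that the increasing linear function x ↦ ⟨d, x⟩ satisfies ⟨d, x_j⟩ > ⟨d, x_k⟩ for all j = 1, …, t. -/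
open Metric Set Pointwise RealInnerProductSpace

/-- There exists an increasing quasi-concave f : ℝ^p → ℝ with
f(x_j) > f(x_k) for all j, iff there exists d > 0 componentwise such that the
increasing linear function x ↦ ⟨d, x⟩ satisfies ⟨d, x_j⟩ > ⟨d, x_k⟩ for all j. -/
theorem stmt_17 (p t : ℕ) (hp : 1 ≤ p) (ht : 1 ≤ t)
    (x : Fin t → EuclideanSpace ℝ (Fin p)) (xk : EuclideanSpace ℝ (Fin p)) :
    (∃ f : EuclideanSpace ℝ (Fin p) → ℝ,
      (∀ a b : EuclideanSpace ℝ (Fin p), (∀ i, a i ≤ b i) → f a ≤ f b) ∧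
      (∀ (a b : EuclideanSpace ℝ (Fin p)) (lam : ℝ), 0 ≤ lam → lam ≤ 1 →
        min (f a) (f b) ≤ f (lam • a + (1 - lam) • b)) ∧
      (∀ j : Fin t, f xk < f (x j))) ↔
    (∃ d : EuclideanSpace ℝ (Fin p),
      (∀ i, 0 < d i) ∧ ∀ j : Fin t, ⟪d, xk⟫ < ⟪d, x j⟫) := by
  classical
  constructor
  · rintro ⟨f, hmono, hqc, hgt⟩
    have htne : Nonempty (Fin t) := ⟨⟨0, ht⟩⟩
    set C : Set (EuclideanSpace ℝ (Fin p)) := {y | ∀ i, 0 ≤ y i} with hCdef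
    have hCconv : Convex ℝ C := by
      intro a ha b hb s r hs hr hsr i
      have h : (s • a + r • b) i = s * a i + r * b i := rfl
      exact h ▸ add_nonneg (mul_nonneg hs (ha i)) (mul_nonneg hr (hb i))
    have hCclosed : IsClosed C := by
      have : C = ⋂ i, {y : EuclideanSpace ℝ (Fin p) | 0 ≤ y i} := by ext y; simp [hCdef]
      rw [this]
      exact isClosed_iInter fun i =>
        isClosed_le continuous_const (EuclideanSpace.proj i).continuous
    set H : Set (EuclideanSpace ℝ (Fin p)) := convexHull ℝ (Set.range x) with hHdef
    set S : Set (EuclideanSpace ℝ (Fin p)) := H + C with hSdef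
    have hSconv : Convex ℝ S := (convex_convexHull ℝ _).add hCconv
    have hSclosed : IsClosed S :=
      hCclosed.add_left_of_isCompact ((Set.finite_range x).isCompact_convexHull ℝ)
    -- every point in H has f ≥ some f (x j)
    have hHlb : ∀ y ∈ H, ∃ j, f (x j) ≤ f y := by
      have : H ⊆ {y | ∃ j, f (x j) ≤ f y} := by
        rw [hHdef]
        apply convexHull_min
        · rintro y ⟨j, rfl⟩; exact ⟨j, le_rfl⟩
        · rintro a ⟨ja, hja⟩ b ⟨jb, hjb⟩ s r hs hr hsr
          have h1 := hqc a b s hs (by linarith)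
          have hsr' : (1 : ℝ) - s = r := by linarith
          rw [hsr'] at h1
          rcases le_total (f a) (f b) with h2 | h2
          · refine ⟨ja, hja.trans ?_⟩; rwa [inf_eq_left.2 h2] at h1
          · refine ⟨jb, hjb.trans ?_⟩; rwa [inf_eq_right.2 h2] at h1
      exact fun y hy => this hy
    have hxkS : xk ∉ S := by
      rintro ⟨y, hy, c, hc, hyc⟩
      obtain ⟨j, hj⟩ := hHlb y hy
      have hle : ∀ i, y i ≤ xk i := by
        intro i
        have h1 : xk i = y i + c i := by rw [← hyc]; rfl
        have h2 := hc i
        rw [h1]; linarith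
      have := hmono y xk hle
      have := hgt j
      linarith
    obtain ⟨g, u, hgu, hgS⟩ := geometric_hahn_banach_point_closed hSconv hSclosed hxkS
    set d₀ : EuclideanSpace ℝ (Fin p) := (InnerProductSpace.toDual ℝ (EuclideanSpace ℝ (Fin p))).symm g with hd0
    have hd0app : ∀ y : EuclideanSpace ℝ (Fin p), ⟪d₀, y⟫ = g y := fun y =>
      InnerProductSpace.toDual_symm_apply
    -- d₀ has nonneg coords
    set j0 : Fin t := ⟨0, ht⟩
    have hxj0 : ∀ c ∈ C, x j0 + c ∈ S :=
      fun c hc => ⟨x j0, subset_convexHull ℝ _ ⟨j0, rfl⟩, c, hc, rfl⟩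
    have hd0nn : ∀ i, 0 ≤ d₀ i := by
      intro i
      by_contra hneg
      push_neg at hneg
      set e : EuclideanSpace ℝ (Fin p) := EuclideanSpace.single i 1 with he
      have hge : g e = d₀ i := by
        rw [← hd0app]
        rw [real_inner_comm]
        simp [he, EuclideanSpace.inner_single_left]
      obtain ⟨n, hn⟩ := exists_nat_gt ((u - g (x j0)) / (g e))
      -- g e < 0
      have hgelt : g e < 0 := by rw [hge]; exact hneg
      have hmem : x j0 + (n : ℝ) • e ∈ S := by
        apply hxj0
        intro i'
        have : ((n : ℝ) • e) i' = (n : ℝ) * e i' := by simp [PiLp.smul_apply]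
        rw [this]
        have : (0:ℝ) ≤ e i' := by
          rw [he]
          by_cases h : i' = i <;> simp [EuclideanSpace.single_apply, h]
        positivity
      have := hgS _ hmem
      rw [map_add, map_smul, smul_eq_mul] at this
      -- u < g (x j0) + n * g e, with n > (u - g(x j0))/(g e), g e < 0
      have h2 : (n : ℝ) * g e < u - g (x j0) := by
        have := (div_lt_iff_of_neg hgelt).mp hn
        linarith
      linarith
    -- strict inequalities for d₀
    have hd0strict : ∀ j, ⟪d₀, xk⟫ < ⟪d₀, x j⟫ := by
      intro j
      rw [hd0app, hd0app]
      have := hgS (x j) ⟨x j, subset_convexHull ℝ _ ⟨j, rfl⟩, 0, fun i => le_rfl, add_zero _⟩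
      linarith
    -- perturb
    set ones : EuclideanSpace ℝ (Fin p) := WithLp.toLp 2 (fun _ => (1 : ℝ)) with hones
    set c : Fin t → ℝ := fun j => (⟪d₀, x j⟫ - ⟪d₀, xk⟫) / (|⟪ones, xk⟫ - ⟪ones, x j⟫| + 1)
      with hcdef
    have hcpos : ∀ j, 0 < c j := by
      intro j
      apply div_pos
      · linarith [hd0strict j]
      · positivity
    set ε : ℝ := (Finset.univ.inf' (Finset.univ_nonempty) c) / 2 with hεdef
    have hεpos : 0 < ε := by
      apply div_pos _ two_pos
      rw [Finset.lt_inf'_iff]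
      exact fun j _ => hcpos j
    have hεlt : ∀ j, ε < c j := by
      intro j
      have h1 : Finset.univ.inf' Finset.univ_nonempty c ≤ c j :=
        Finset.inf'_le _ (Finset.mem_univ j)
      have := hcpos j
      rw [hεdef]; linarith
    refine ⟨d₀ + ε • ones, ?_, ?_⟩
    · intro i
      have : (d₀ + ε • ones) i = d₀ i + ε * 1 := by
        simp [PiLp.add_apply, PiLp.smul_apply, hones]
      rw [this]
      have := hd0nn i
      linarith
    · intro j
      rw [inner_add_left, inner_add_left, real_inner_smul_left, real_inner_smul_left]
      have key : ε * (⟪ones, xk⟫ - ⟪ones, x j⟫) < ⟪d₀, x j⟫ - ⟪d₀, xk⟫ := by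
        calc ε * (⟪ones, xk⟫ - ⟪ones, x j⟫) ≤ ε * |⟪ones, xk⟫ - ⟪ones, x j⟫| := by
              apply mul_le_mul_of_nonneg_left (le_abs_self _) hεpos.le
          _ < c j * (|⟪ones, xk⟫ - ⟪ones, x j⟫| + 1) := by
              apply mul_lt_mul' (hεlt j).le ?_ (abs_nonneg _) (hcpos j)
              · linarith
          _ = ⟪d₀, x j⟫ - ⟪d₀, xk⟫ := by
              rw [hcdef]
              field_simp
      linarith
  · rintro ⟨d, hdpos, hdlt⟩
    refine ⟨fun y => ⟪d, y⟫, ?_, ?_, hdlt⟩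
    · intro a b hab
      show ⟪d, a⟫ ≤ ⟪d, b⟫
      rw [PiLp.inner_apply, PiLp.inner_apply]
      apply Finset.sum_le_sum
      intro i _
      simp only [RCLike.inner_apply, conj_trivial]
      exact mul_le_mul_of_nonneg_right (hab i) (hdpos i).le
    · intro a b lam h0 h1
      show min ⟪d,a⟫ ⟪d,b⟫ ≤ ⟪d, lam • a + (1 - lam) • b⟫
      rw [inner_add_right, real_inner_smul_right, real_inner_smul_right]
      have hmin1 : min ⟪d,a⟫ ⟪d,b⟫ ≤ ⟪d,a⟫ := min_le_left _ _
      have hmin2 : min ⟪d,a⟫ ⟪d,b⟫ ≤ ⟪d,b⟫ := min_le_right _ _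
      nlinarith
end
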